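/- arXiv:math/0601371 — 5 statements merged into one kernel-verified Lean document; each statement's English description precedes it below -/
import Mathlib

section
/- Euler's pentagonal-type identity for the Dedekind eta function: for τ in the upper half-plane, exp(πiτ/12) · ∏_{k=1}^∞ (1 − exp(2kπiτ)) = exp(πiτ/12) · ∑_{k∈ℤ} (−1)^k exp((3k²+k)πiτ); equivalently ∏_{k=1}^∞ (1 − q^k) = ∑_{k∈ℤ} (−1)^k q^{(3k²+k)/2} with q = exp(2πiτ). -/
open Finset Filter Topology

namespace Penta

noncomputable section
variable (w : ℂ)

def pp (m : ℕ) : ℂ := ∏ i ∈ range m, (1 - w ^ (6 * (i + 1)))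

def cgb (n : ℕ) (k : ℤ) : ℂ :=
  if 0 ≤ k ∧ k ≤ n then pp w n / (pp w k.toNat * pp w (n - k.toNat)) else 0

def T (j : ℤ) : ℂ := (-1) ^ j * w ^ (3 * j ^ 2 + j)

variable {w}

lemma one_sub_pow_ne (hw : ‖w‖ < 1) {e : ℕ} (he : e ≠ 0) : (1 : ℂ) - w ^ e ≠ 0 := by
  intro h
  have h1 : w ^ e = 1 := by linear_combination -h
  have h2 := norm_pow w e ▸ congrArg norm h1
  simp only [norm_one] at h2
  have : ‖w‖ ^ e < 1 := pow_lt_one₀ (norm_nonneg w) hw he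
  simp_all

lemma pp_zero : pp w 0 = 1 := prod_range_zero _

lemma pp_ne_zero (hw : ‖w‖ < 1) (m : ℕ) : pp w m ≠ 0 :=
  prod_ne_zero_iff.2 fun i _ => one_sub_pow_ne hw (by omega)

lemma pp_succ (m : ℕ) : pp w (m + 1) = pp w m * (1 - w ^ (6 * (m + 1))) :=
  prod_range_succ _ m

lemma cgb_zero_of {n : ℕ} {k : ℤ} (h : k < 0 ∨ (n : ℤ) < k) : cgb w n k = 0 := by
  rw [cgb, if_neg]; omega

lemma cgb_zero_right (hw : ‖w‖ < 1) (n : ℕ) : cgb w n 0 = 1 := by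
  rw [cgb, if_pos (by omega)]
  simp only [Int.toNat_zero, pp_zero, Nat.sub_zero, one_mul]
  exact div_self (pp_ne_zero hw n)

lemma cgb_self (hw : ‖w‖ < 1) (n : ℕ) : cgb w n n = 1 := by
  rw [cgb, if_pos (by omega), Int.toNat_natCast]
  simp only [Nat.sub_self, pp_zero, mul_one]
  exact div_self (pp_ne_zero hw n)

lemma cgb_nat {n a : ℕ} (h : a ≤ n) :
    cgb w n (a : ℤ) = pp w n / (pp w a * pp w (n - a)) := by
  rw [cgb, if_pos (by omega), Int.toNat_natCast]

lemma pascalA (hw : ‖w‖ < 1) (hw0 : w ≠ 0) (n : ℕ) (k : ℤ) :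
    cgb w (n + 1) k = cgb w n k + w ^ (6 * ((n : ℤ) + 1 - k)) * cgb w n (k - 1) := by
  rcases lt_or_ge k 0 with hk | hk
  · rw [cgb_zero_of (Or.inl hk), cgb_zero_of (Or.inl hk),
      cgb_zero_of (Or.inl (by omega))]; ring
  rcases eq_or_lt_of_le hk with hk0 | hkpos
  · rw [← hk0, cgb_zero_right hw, cgb_zero_right hw, cgb_zero_of (Or.inl (by omega))]; ring
  rcases lt_or_ge (n : ℤ) k with hkn | hkn
  · rcases eq_or_lt_of_le (by omega : (n : ℤ) + 1 ≤ k) with hke | hke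
    · have l1 : cgb w (n+1) k = 1 := by
        rw [← hke, show ((n:ℤ)+1) = ((n+1 : ℕ) : ℤ) by push_cast; ring, cgb_self hw]
      have l2 : cgb w n k = 0 := cgb_zero_of (Or.inr (by omega))
      have l3 : cgb w n (k - 1) = 1 := by
        rw [← hke, show ((n:ℤ)+1-1) = ((n : ℕ) : ℤ) by push_cast; ring, cgb_self hw]
      rw [l1, l2, l3, ← hke, show 6*((n:ℤ)+1-((n:ℤ)+1)) = 0 by ring, zpow_zero]; ring
    · rw [cgb_zero_of (Or.inr (by push_cast; omega)), cgb_zero_of (Or.inr hkn),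
        cgb_zero_of (Or.inr (by omega))]; ring
  -- main case 1 ≤ k ≤ n
  obtain ⟨a, rfl⟩ : ∃ a : ℕ, k = (a : ℤ) := ⟨k.toNat, by omega⟩
  obtain ⟨c, rfl⟩ : ∃ c : ℕ, a = c + 1 := ⟨a - 1, by omega⟩
  obtain ⟨b, rfl⟩ : ∃ b : ℕ, n = (c + 1) + b := ⟨n - (c+1), by omega⟩
  have e1 : cgb w (c+1+b+1) ((c+1 : ℕ) : ℤ) = pp w (c+b+2) / (pp w (c+1) * pp w (b+1)) := by
    rw [cgb_nat (by omega), show c+1+b+1 - (c+1) = b+1 by omega, show c+1+b+1 = c+b+2 by omega]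
  have e2 : cgb w (c+1+b) ((c+1 : ℕ) : ℤ) = pp w (c+b+1) / (pp w (c+1) * pp w b) := by
    rw [cgb_nat (by omega), show c+1+b - (c+1) = b by omega, show c+1+b = c+b+1 by omega]
  have e3 : cgb w (c+1+b) (((c+1 : ℕ) : ℤ) - 1) = pp w (c+b+1) / (pp w c * pp w (b+1)) := by
    rw [show ((c+1:ℕ):ℤ) - 1 = ((c:ℕ):ℤ) by push_cast; ring, cgb_nat (by omega),
      show c+1+b - c = b+1 by omega, show c+1+b = c+b+1 by omega]
  have ezp : (w : ℂ) ^ (6 * (((c+1+b : ℕ) : ℤ) + 1 - ((c+1 : ℕ) : ℤ))) = w ^ (6*(b+1)) := by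
    rw [show (6 * (((c+1+b : ℕ) : ℤ) + 1 - ((c+1 : ℕ) : ℤ))) = ((6*(b+1) : ℕ) : ℤ) by
      push_cast; ring, zpow_natCast]
  rw [e1, e2, e3, ezp,
    show pp w (c+1) = pp w c * (1 - w ^ (6 * (c + 1))) from pp_succ c,
    show pp w (b+1) = pp w b * (1 - w ^ (6 * (b + 1))) from pp_succ b,
    show pp w (c+b+2) = pp w (c+b+1) * (1 - w ^ (6 * (c + b + 2))) from pp_succ (c+b+1)]
  have h1 := pp_ne_zero hw c
  have h2 := pp_ne_zero hw b
  have h3 := pp_ne_zero hw (c+b+1)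
  have h4 := one_sub_pow_ne hw (show 6 * (c+1) ≠ 0 by omega)
  have h5 := one_sub_pow_ne hw (show 6 * (b+1) ≠ 0 by omega)
  field_simp
  ring

lemma pascalB (hw : ‖w‖ < 1) (hw0 : w ≠ 0) (n : ℕ) (k : ℤ) :
    cgb w (n + 1) k = w ^ (6 * k) * cgb w n k + cgb w n (k - 1) := by
  rcases lt_or_ge k 0 with hk | hk
  · rw [cgb_zero_of (Or.inl hk), cgb_zero_of (Or.inl hk),
      cgb_zero_of (Or.inl (by omega))]; ring
  rcases eq_or_lt_of_le hk with hk0 | hkpos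
  · rw [← hk0, cgb_zero_right hw, cgb_zero_right hw, cgb_zero_of (Or.inl (by omega))]
    simp
  rcases lt_or_ge (n : ℤ) k with hkn | hkn
  · rcases eq_or_lt_of_le (by omega : (n : ℤ) + 1 ≤ k) with hke | hke
    · have l1 : cgb w (n+1) k = 1 := by
        rw [← hke, show ((n:ℤ)+1) = ((n+1 : ℕ) : ℤ) by push_cast; ring, cgb_self hw]
      have l2 : cgb w n k = 0 := cgb_zero_of (Or.inr (by omega))
      have l3 : cgb w n (k - 1) = 1 := by
        rw [← hke, show ((n:ℤ)+1-1) = ((n : ℕ) : ℤ) by push_cast; ring, cgb_self hw]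
      rw [l1, l2, l3]; ring
    · rw [cgb_zero_of (Or.inr (by push_cast; omega)), cgb_zero_of (Or.inr hkn),
        cgb_zero_of (Or.inr (by omega))]; ring
  obtain ⟨a, rfl⟩ : ∃ a : ℕ, k = (a : ℤ) := ⟨k.toNat, by omega⟩
  obtain ⟨c, rfl⟩ : ∃ c : ℕ, a = c + 1 := ⟨a - 1, by omega⟩
  obtain ⟨b, rfl⟩ : ∃ b : ℕ, n = (c + 1) + b := ⟨n - (c+1), by omega⟩
  have e1 : cgb w (c+1+b+1) ((c+1 : ℕ) : ℤ) = pp w (c+b+2) / (pp w (c+1) * pp w (b+1)) := by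
    rw [cgb_nat (by omega), show c+1+b+1 - (c+1) = b+1 by omega, show c+1+b+1 = c+b+2 by omega]
  have e2 : cgb w (c+1+b) ((c+1 : ℕ) : ℤ) = pp w (c+b+1) / (pp w (c+1) * pp w b) := by
    rw [cgb_nat (by omega), show c+1+b - (c+1) = b by omega, show c+1+b = c+b+1 by omega]
  have e3 : cgb w (c+1+b) (((c+1 : ℕ) : ℤ) - 1) = pp w (c+b+1) / (pp w c * pp w (b+1)) := by
    rw [show ((c+1:ℕ):ℤ) - 1 = ((c:ℕ):ℤ) by push_cast; ring, cgb_nat (by omega),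
      show c+1+b - c = b+1 by omega, show c+1+b = c+b+1 by omega]
  have ezp : (w : ℂ) ^ (6 * ((c+1 : ℕ) : ℤ)) = w ^ (6*(c+1)) := by
    rw [show (6 * ((c+1 : ℕ) : ℤ)) = ((6*(c+1) : ℕ) : ℤ) by push_cast; ring, zpow_natCast]
  rw [e1, e2, e3, ezp,
    show pp w (c+1) = pp w c * (1 - w ^ (6 * (c + 1))) from pp_succ c,
    show pp w (b+1) = pp w b * (1 - w ^ (6 * (b + 1))) from pp_succ b,
    show pp w (c+b+2) = pp w (c+b+1) * (1 - w ^ (6 * (c + b + 2))) from pp_succ (c+b+1)]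
  have h1 := pp_ne_zero hw c
  have h2 := pp_ne_zero hw b
  have h3 := pp_ne_zero hw (c+b+1)
  have h4 := one_sub_pow_ne hw (show 6 * (c+1) ≠ 0 by omega)
  have h5 := one_sub_pow_ne hw (show 6 * (b+1) ≠ 0 by omega)
  field_simp
  ring

lemma dagger (hw : ‖w‖ < 1) (hw0 : w ≠ 0) (n : ℕ) (j : ℤ) :
    cgb w (2*n+2) ((n : ℤ)+1+j)
      = w ^ (6*((n:ℤ)+1+j)) * cgb w (2*n) ((n:ℤ)+j+1)
        + (1 + w ^ (6*(2*(n:ℤ)+1))) * cgb w (2*n) ((n:ℤ)+j)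
        + w ^ (6*((n:ℤ)+1-j)) * cgb w (2*n) ((n:ℤ)+j-1) := by
  have h1 := pascalA hw hw0 (2*n+1) ((n:ℤ)+1+j)
  have h2 := pascalB hw hw0 (2*n) ((n:ℤ)+1+j)
  have h3 := pascalB hw hw0 (2*n) ((n:ℤ)+j)
  rw [show (2*n+1)+1 = 2*n+2 by omega] at h1
  rw [show ((n:ℤ)+1+j) - 1 = (n:ℤ)+j by ring] at h1 h2
  rw [h2, h3] at h1
  rw [h1]
  rw [show (((2*n+1 : ℕ)):ℤ) + 1 - ((n:ℤ)+1+j) = (n:ℤ)+1-j by push_cast; ring]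
  have m1 : (w : ℂ) ^ (6*((n:ℤ)+1-j)) * (w ^ (6*((n:ℤ)+j)) * cgb w (2*n) ((n:ℤ)+j))
      = w ^ (6*(2*(n:ℤ)+1)) * cgb w (2*n) ((n:ℤ)+j) := by
    rw [← mul_assoc, ← zpow_add₀ hw0]
    congr 2
    ring
  rw [show ((n:ℤ)+1+j) = (n:ℤ)+j+1 by ring]
  linear_combination m1

lemma Tcoef (hw0 : w ≠ 0) (n : ℕ) (j : ℤ) :
    T w (j-1) * w ^ (6*((n:ℤ)+j)) + T w j * (1 + w ^ (6*(2*(n:ℤ)+1)))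
      + T w (j+1) * w ^ (6*((n:ℤ)-j))
    = T w j * ((1 - w ^ (6*(n:ℤ)+2)) * (1 - w ^ (6*(n:ℤ)+4))) := by
  have hne : (-1 : ℂ) ≠ 0 := by norm_num
  simp only [T]
  have e1 : (-1 : ℂ) ^ (j-1) = -(-1 : ℂ) ^ j := by
    rw [zpow_sub₀ hne, zpow_one]
    field_simp
  have e2 : (-1 : ℂ) ^ (j+1) = -(-1 : ℂ) ^ j := by
    rw [zpow_add₀ hne, zpow_one]
    ring
  rw [e1, e2]
  have m1 : (w : ℂ) ^ (3*(j-1)^2+(j-1)) * w ^ (6*((n:ℤ)+j))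
      = w ^ (3*j^2+j) * w ^ (6*(n:ℤ)+2) := by
    rw [← zpow_add₀ hw0, ← zpow_add₀ hw0]; congr 1; ring
  have m2 : (w : ℂ) ^ (3*j^2+j) * w ^ (6*(2*(n:ℤ)+1))
      = (w ^ (3*j^2+j) * w ^ (6*(n:ℤ)+2)) * w ^ (6*(n:ℤ)+4) := by
    rw [← zpow_add₀ hw0, ← zpow_add₀ hw0, ← zpow_add₀ hw0]; congr 1; ring
  have m3 : (w : ℂ) ^ (3*(j+1)^2+(j+1)) * w ^ (6*((n:ℤ)-j))
      = w ^ (3*j^2+j) * w ^ (6*(n:ℤ)+4) := by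
    rw [← zpow_add₀ hw0, ← zpow_add₀ hw0]; congr 1; ring
  linear_combination (-(-1:ℂ)^j) * m1 + ((-1:ℂ)^j) * m2 + (-(-1:ℂ)^j) * m3

lemma key (hw : ‖w‖ < 1) (hw0 : w ≠ 0) (n : ℕ) :
    ∑ j ∈ Icc (-(n:ℤ)-1) ((n:ℤ)+1), T w j * cgb w (2*n+2) ((n:ℤ)+1+j)
      = ((1 - w ^ (6*n+2)) * (1 - w ^ (6*n+4)))
        * ∑ j ∈ Icc (-(n:ℤ)) (n:ℤ), T w j * cgb w (2*n) ((n:ℤ)+j) := by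
  have hsplit : ∀ j ∈ Icc (-(n:ℤ)-1) ((n:ℤ)+1),
      T w j * cgb w (2*n+2) ((n:ℤ)+1+j)
        = T w j * (w ^ (6*((n:ℤ)+1+j)) * cgb w (2*n) ((n:ℤ)+1+j))
          + (T w j * ((1 + w ^ (6*(2*(n:ℤ)+1))) * cgb w (2*n) ((n:ℤ)+j))
            + T w j * (w ^ (6*((n:ℤ)+1-j)) * cgb w (2*n) ((n:ℤ)+j-1))) := by
    intro j _
    rw [dagger hw hw0, show (n:ℤ)+j+1 = (n:ℤ)+1+j by ring]
    ring
  rw [sum_congr rfl hsplit, sum_add_distrib, sum_add_distrib]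
  -- Σ₁ reindex
  have s1 : ∑ j ∈ Icc (-(n:ℤ)-1+1) ((n:ℤ)+1+1), T w (j-1) * (w ^ (6*((n:ℤ)+j)) * cgb w (2*n) ((n:ℤ)+j))
      = ∑ j ∈ Icc (-(n:ℤ)-1) ((n:ℤ)+1), T w j * (w ^ (6*((n:ℤ)+1+j)) * cgb w (2*n) ((n:ℤ)+1+j)) := by
    rw [← map_add_right_Icc, sum_map]
    apply sum_congr rfl
    intro j _
    simp only [addRightEmbedding_apply]
    rw [show j+1-1 = j by ring, show (n:ℤ)+(j+1) = (n:ℤ)+1+j by ring]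
  have s3 : ∑ j ∈ Icc (-(n:ℤ)-1+(-1)) ((n:ℤ)+1+(-1)), T w (j+1) * (w ^ (6*((n:ℤ)-j)) * cgb w (2*n) ((n:ℤ)+j))
      = ∑ j ∈ Icc (-(n:ℤ)-1) ((n:ℤ)+1), T w j * (w ^ (6*((n:ℤ)+1-j)) * cgb w (2*n) ((n:ℤ)+j-1)) := by
    rw [← map_add_right_Icc, sum_map]
    apply sum_congr rfl
    intro j _
    simp only [addRightEmbedding_apply]
    rw [show j+(-1)+1 = j by ring, show (n:ℤ)-(j+(-1)) = (n:ℤ)+1-j by ring,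
      show (n:ℤ)+(j+(-1)) = (n:ℤ)+j-1 by ring]
  rw [← s1, ← s3]
  -- truncations
  have t1 : ∑ j ∈ Icc (-(n:ℤ)-1+1) ((n:ℤ)+1+1), T w (j-1) * (w ^ (6*((n:ℤ)+j)) * cgb w (2*n) ((n:ℤ)+j))
      = ∑ j ∈ Icc (-(n:ℤ)) (n:ℤ), T w (j-1) * (w ^ (6*((n:ℤ)+j)) * cgb w (2*n) ((n:ℤ)+j)) := by
    apply (sum_subset (Icc_subset_Icc (by omega) (by omega)) _).symm
    intro j hj hj2
    simp only [mem_Icc] at hj hj2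
    rw [cgb_zero_of (Or.inr (by push_cast; omega))]
    ring
  have t2 : ∑ j ∈ Icc (-(n:ℤ)-1) ((n:ℤ)+1), T w j * ((1 + w ^ (6*(2*(n:ℤ)+1))) * cgb w (2*n) ((n:ℤ)+j))
      = ∑ j ∈ Icc (-(n:ℤ)) (n:ℤ), T w j * ((1 + w ^ (6*(2*(n:ℤ)+1))) * cgb w (2*n) ((n:ℤ)+j)) := by
    apply (sum_subset (Icc_subset_Icc (by omega) (by omega)) _).symm
    intro j hj hj2
    simp only [mem_Icc] at hj hj2
    rcases lt_or_ge j (-(n:ℤ)) with h | h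
    · rw [cgb_zero_of (Or.inl (by omega))]; ring
    · rw [cgb_zero_of (Or.inr (by push_cast; omega))]; ring
  have t3 : ∑ j ∈ Icc (-(n:ℤ)-1+(-1)) ((n:ℤ)+1+(-1)), T w (j+1) * (w ^ (6*((n:ℤ)-j)) * cgb w (2*n) ((n:ℤ)+j))
      = ∑ j ∈ Icc (-(n:ℤ)) (n:ℤ), T w (j+1) * (w ^ (6*((n:ℤ)-j)) * cgb w (2*n) ((n:ℤ)+j)) := by
    apply (sum_subset (Icc_subset_Icc (by omega) (by omega)) _).symm
    intro j hj hj2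
    simp only [mem_Icc] at hj hj2
    rw [cgb_zero_of (Or.inl (by omega))]
    ring
  rw [t1, t2, t3, ← sum_add_distrib, ← sum_add_distrib, mul_sum]
  apply sum_congr rfl
  intro j _
  have hc := Tcoef (w := w) hw0 n j
  have c2 : (w : ℂ) ^ (6*(n:ℤ)+2) = w ^ (6*n+2) := by
    rw [show (6*(n:ℤ)+2) = ((6*n+2:ℕ):ℤ) by push_cast; ring, zpow_natCast]
  have c4 : (w : ℂ) ^ (6*(n:ℤ)+4) = w ^ (6*n+4) := by
    rw [show (6*(n:ℤ)+4) = ((6*n+4:ℕ):ℤ) by push_cast; ring, zpow_natCast]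
  rw [c2, c4] at hc
  linear_combination (cgb w (2*n) ((n:ℤ)+j)) * hc

lemma main_id (hw : ‖w‖ < 1) (hw0 : w ≠ 0) (n : ℕ) :
    ∏ i ∈ range (3*n), (1 - w ^ (2*(i+1)))
      = pp w n * ∑ j ∈ Icc (-(n:ℤ)) (n:ℤ), T w j * cgb w (2*n) ((n:ℤ)+j) := by
  induction n with
  | zero =>
      simp only [Nat.mul_zero, prod_range_zero, Nat.cast_zero, neg_zero, Icc_self,
        sum_singleton, pp_zero, one_mul, add_zero]
      rw [cgb_zero_right hw, T]
      simp
  | succ n ih =>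
      rw [show 3*(n+1) = 3*n+1+1+1 by omega, prod_range_succ, prod_range_succ, prod_range_succ,
        ih, show 2*(n+1) = 2*n+2 by omega,
        show ((n+1:ℕ):ℤ) = (n:ℤ)+1 by push_cast; ring,
        show -((n:ℤ)+1) = -(n:ℤ)-1 by ring, key hw hw0 n, pp_succ]
      ring


-- ANALYTIC PART

lemma summable_log (hw : ‖w‖ < 1) (e : ℕ → ℕ) (he : ∀ i, i + 1 ≤ e i) :
    Summable (fun i => Complex.log (1 - w ^ (e i))) := by
  apply Summable.of_norm_bounded_eventually_nat (g := fun i => (3/2 : ℝ) * ‖w‖ ^ (i+1))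
  · apply Summable.mul_left
    refine ((summable_geometric_of_lt_one (norm_nonneg w) hw).mul_left ‖w‖).congr fun i => ?_
    rw [← pow_succ']
  · have h0 : Tendsto (fun i : ℕ => ‖w‖ ^ (i+1)) atTop (𝓝 0) :=
      (tendsto_pow_atTop_nhds_zero_of_lt_one (norm_nonneg w) hw).comp (tendsto_add_atTop_nat 1)
    have hev : ∀ᶠ i : ℕ in atTop, ‖w‖ ^ (i+1) < 1/2 := h0.eventually (gt_mem_nhds (by norm_num))
    filter_upwards [hev] with i hi
    have hei : ‖w‖ ^ (e i) ≤ ‖w‖ ^ (i+1) := pow_le_pow_of_le_one (norm_nonneg w) hw.le (he i)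
    have h1 : ‖-w ^ (e i)‖ ≤ 1/2 := by
      rw [norm_neg, norm_pow]
      exact hei.trans hi.le
    have h2 := Complex.norm_log_one_add_half_le_self h1
    rw [show (1 : ℂ) + -w ^ (e i) = 1 - w ^ (e i) by ring] at h2
    refine h2.trans ?_
    rw [norm_neg, norm_pow]
    exact mul_le_mul_of_nonneg_left hei (by norm_num)

lemma multipliable_aux (hw : ‖w‖ < 1) (e : ℕ → ℕ) (he : ∀ i, i + 1 ≤ e i) :
    Multipliable (fun i => 1 - w ^ (e i)) :=
  Complex.multipliable_of_summable_log (summable_log hw e he)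

lemma tprod_ne_zero (hw : ‖w‖ < 1) (e : ℕ → ℕ) (he : ∀ i, i + 1 ≤ e i) :
    (∏' i, (1 - w ^ (e i))) ≠ 0 := by
  have h := Complex.cexp_tsum_eq_tprod (f := fun i => 1 - w ^ (e i))
    (fun i => one_sub_pow_ne hw (by have := he i; omega))
    (summable_log hw e he)
  rw [← h]
  exact Complex.exp_ne_zero _

lemma sum_pow_le (hw : ‖w‖ < 1) (m : ℕ) (s : Finset ℕ) (h : ∀ i ∈ s, m ≤ i) :
    ∑ i ∈ s, ‖w‖ ^ (6*(i+1)) ≤ ‖w‖ ^ m / (1 - ‖w‖) := by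
  set t := ‖w‖ with ht
  have t0 : 0 ≤ t := norm_nonneg w
  have t1 : t < 1 := hw
  have h1 : ∑ i ∈ s, t ^ (6*(i+1)) ≤ ∑ i ∈ s, t ^ i :=
    sum_le_sum fun i _ => pow_le_pow_of_le_one t0 t1.le (by omega)
  rcases s.eq_empty_or_nonempty with rfl | hs
  · simp only [sum_empty]
    have hden : (0:ℝ) < 1 - t := by linarith
    positivity
  refine h1.trans ?_
  have hms : m ≤ s.sup id := by
    obtain ⟨x, hx⟩ := hs
    exact (h x hx).trans (Finset.le_sup (f := id) hx)
  have h2 : ∑ i ∈ s, t ^ i ≤ ∑ i ∈ Ico m (s.sup id + 1), t ^ i := by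
    apply sum_le_sum_of_subset_of_nonneg
    · intro i hi
      rw [mem_Ico]
      exact ⟨h i hi, Nat.lt_succ_of_le (Finset.le_sup (f := id) hi)⟩
    · intro i _ _
      positivity
  refine h2.trans ?_
  rw [geom_sum_Ico (by linarith) (by omega)]
  have h3 : (t ^ (s.sup id + 1) - t ^ m) / (t - 1) = (t ^ m - t ^ (s.sup id + 1)) / (1 - t) := by
    rw [div_eq_div_iff (by linarith) (by linarith)]
    ring
  rw [h3]
  have hden : (0:ℝ) < 1 - t := by linarith
  have h4 : t ^ m - t ^ (s.sup id + 1) ≤ t ^ m := by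
    nlinarith [pow_nonneg t0 (s.sup id + 1)]
  exact (div_le_div_iff_of_pos_right hden).mpr h4

lemma prod_norm_le (hw : ‖w‖ < 1) (m : ℕ) (s : Finset ℕ) (h : ∀ i ∈ s, m ≤ i) :
    ‖∏ i ∈ s, (1 - w ^ (6*(i+1)))‖ ≤ Real.exp (‖w‖ ^ m / (1 - ‖w‖)) := by
  have h1 : ‖∏ i ∈ s, (1 - w ^ (6*(i+1)))‖ = ∏ i ∈ s, ‖(1 - w ^ (6*(i+1)) : ℂ)‖ :=
    norm_prod s _
  rw [h1]
  have h2 : ∏ i ∈ s, ‖(1 - w ^ (6*(i+1)) : ℂ)‖ ≤ ∏ i ∈ s, Real.exp (‖w‖ ^ (6*(i+1))) := by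
    apply prod_le_prod (fun i _ => norm_nonneg _)
    intro i _
    have : ‖(1 - w ^ (6*(i+1)) : ℂ)‖ ≤ 1 + ‖w‖ ^ (6*(i+1)) := by
      refine (norm_sub_le _ _).trans ?_
      rw [norm_one, norm_pow]
    refine this.trans ?_
    linarith [Real.add_one_le_exp (‖w‖ ^ (6*(i+1)))]
  refine h2.trans ?_
  rw [← Real.exp_sum]
  exact Real.exp_le_exp.mpr (sum_pow_le hw m s h)

lemma D_repr (hw : ‖w‖ < 1) (n : ℕ) (j : ℤ) (hj : j ∈ Icc (-(n:ℤ)) (n:ℤ)) :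
    ∃ s₁ s₂ : Finset ℕ, (∀ i ∈ s₁, n - j.natAbs ≤ i) ∧ (∀ i ∈ s₂, n - j.natAbs ≤ i) ∧
      pp w n * cgb w (2*n) ((n:ℤ)+j)
        = (∏ i ∈ s₁, (1 - w ^ (6*(i+1)))) * ∏ i ∈ s₂, (1 - w ^ (6*(i+1))) := by
  simp only [mem_Icc] at hj
  have hsplit : ∀ a b : ℕ, a ≤ b → pp w b = pp w a * ∏ i ∈ Ico a b, (1 - w ^ (6*(i+1))) :=
    fun a b hab => (prod_range_mul_prod_Ico _ hab).symm
  rcases le_or_gt 0 j with hj0 | hj0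
  · obtain ⟨a, rfl⟩ : ∃ a : ℕ, j = (a:ℤ) := ⟨j.toNat, by omega⟩
    have ha : a ≤ n := by omega
    refine ⟨Ico (n+a) (2*n), Ico (n-a) n, ?_, ?_, ?_⟩
    · intro i hi; rw [mem_Ico] at hi; simp only [Int.natAbs_natCast]; omega
    · intro i hi; rw [mem_Ico] at hi; simp only [Int.natAbs_natCast]; omega
    rw [show (n:ℤ)+(a:ℤ) = ((n+a:ℕ):ℤ) by push_cast; ring, cgb_nat (by omega),
      show 2*n-(n+a) = n-a by omega,
      hsplit (n+a) (2*n) (by omega), hsplit (n-a) n (by omega)]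
    field_simp [pp_ne_zero hw]
  · obtain ⟨a, rfl⟩ : ∃ a : ℕ, j = -(a:ℤ) := ⟨(-j).toNat, by omega⟩
    have ha : a ≤ n := by omega
    refine ⟨Ico (n+a) (2*n), Ico (n-a) n, ?_, ?_, ?_⟩
    · intro i hi; rw [mem_Ico] at hi; simp only [Int.natAbs_neg, Int.natAbs_natCast]; omega
    · intro i hi; rw [mem_Ico] at hi; simp only [Int.natAbs_neg, Int.natAbs_natCast]; omega
    rw [show (n:ℤ)+(-(a:ℤ)) = ((n-a:ℕ):ℤ) by push_cast; omega, cgb_nat (by omega),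
      show 2*n-(n-a) = n+a by omega,
      hsplit (n+a) (2*n) (by omega), hsplit (n-a) n (by omega)]
    field_simp [pp_ne_zero hw]

lemma D_tendsto (hw : ‖w‖ < 1) (j : ℤ) :
    Tendsto (fun n => pp w n * cgb w (2*n) ((n:ℤ)+j)) atTop (𝓝 1) := by
  have he : ∀ i : ℕ, i + 1 ≤ 6*(i+1) := fun i => by omega
  set L := ∏' i : ℕ, (1 - w ^ (6*(i+1))) with hLdef
  have hL : Tendsto (fun m => pp w m) atTop (𝓝 L) :=
    (multipliable_aux hw _ he).hasProd.tendsto_prod_nat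
  have hL0 : L ≠ 0 := tprod_ne_zero hw _ he
  have c1 : Tendsto (fun n : ℕ => 2*n) atTop atTop :=
    tendsto_atTop_mono (fun n => by simp only [id_eq]; omega) tendsto_id
  have c2 : Tendsto (fun n : ℕ => ((n:ℤ)+j).toNat) atTop atTop := by
    rw [tendsto_atTop]
    intro b
    filter_upwards [eventually_ge_atTop (b + j.natAbs)] with n hn
    omega
  have c3 : Tendsto (fun n : ℕ => ((n:ℤ)-j).toNat) atTop atTop := by
    rw [tendsto_atTop]
    intro b
    filter_upwards [eventually_ge_atTop (b + j.natAbs)] with n hn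
    omega
  have hg : Tendsto (fun n : ℕ => pp w n * pp w (2*n) /
      (pp w (((n:ℤ)+j).toNat) * pp w (((n:ℤ)-j).toNat))) atTop (𝓝 (L * L / (L * L))) :=
    Tendsto.div (hL.mul (hL.comp c1)) ((hL.comp c2).mul (hL.comp c3)) (mul_ne_zero hL0 hL0)
  rw [div_self (mul_ne_zero hL0 hL0)] at hg
  apply hg.congr'
  filter_upwards [eventually_ge_atTop j.natAbs] with n hn
  have h2 : cgb w (2*n) ((n:ℤ)+j)
      = pp w (2*n) / (pp w (((n:ℤ)+j).toNat) * pp w (((n:ℤ)-j).toNat)) := by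
    rw [cgb, if_pos (by constructor <;> [omega; (push_cast; omega)]),
      show 2*n - ((n:ℤ)+j).toNat = ((n:ℤ)-j).toNat by omega]
  rw [h2]
  field_simp [pp_ne_zero hw]

lemma pent_nonneg (j : ℤ) : 0 ≤ 3*j^2+j := by
  rcases le_or_gt 0 j with h | h
  · nlinarith
  · have h1 : (0:ℤ) ≤ (-j) * (-(3*j+1)) :=
      mul_nonneg (by omega) (by omega)
    nlinarith

lemma natAbs_le_pent (j : ℤ) : (j.natAbs : ℤ) ≤ 3*j^2+j := by
  rcases le_or_gt 0 j with h | h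
  · have : (j.natAbs : ℤ) = j := by omega
    nlinarith
  · have h0 : (j.natAbs : ℤ) = -j := by omega
    have h1 : (0:ℤ) ≤ (-j) * (-(3*j+2)) := mul_nonneg (by omega) (by omega)
    nlinarith

lemma T_norm_le (hw : ‖w‖ < 1) (hw0 : w ≠ 0) (j : ℤ) : ‖T w j‖ ≤ ‖w‖ ^ j.natAbs := by
  rw [T, norm_mul, norm_zpow, norm_zpow]
  have e1 : ‖(-1 : ℂ)‖ = 1 := by simp
  rw [e1, one_zpow, one_mul]
  have h0 := pent_nonneg j
  have h1 : ‖w‖ ^ (3*j^2+j) = ‖w‖ ^ ((3*j^2+j).toNat) := by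
    rw [← zpow_natCast, Int.toNat_of_nonneg h0]
  rw [h1]
  apply pow_le_pow_of_le_one (norm_nonneg w) hw.le
  have := natAbs_le_pent j
  omega

lemma F_bound (hw : ‖w‖ < 1) (hw0 : w ≠ 0) (n : ℕ) (j : ℤ) :
    ‖(if j ∈ Icc (-(n:ℤ)) (n:ℤ) then T w j * (pp w n * cgb w (2*n) ((n:ℤ)+j)) else 0 : ℂ)‖
      ≤ (Real.exp (1/(1-‖w‖)))^2 * ‖w‖ ^ j.natAbs := by
  have hden : (0:ℝ) < 1 - ‖w‖ := by linarith
  have hE0 : (0:ℝ) ≤ Real.exp (1/(1-‖w‖)) := (Real.exp_pos _).le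
  split_ifs with hmem
  · obtain ⟨s₁, s₂, h₁, h₂, hD⟩ := D_repr hw n j hmem
    rw [norm_mul, hD, norm_mul]
    have b1 : ‖∏ i ∈ s₁, (1 - w ^ (6*(i+1)))‖ ≤ Real.exp (1/(1-‖w‖)) := by
      have := prod_norm_le hw 0 s₁ (fun i _ => Nat.zero_le i)
      rwa [pow_zero] at this
    have b2 : ‖∏ i ∈ s₂, (1 - w ^ (6*(i+1)))‖ ≤ Real.exp (1/(1-‖w‖)) := by
      have := prod_norm_le hw 0 s₂ (fun i _ => Nat.zero_le i)
      rwa [pow_zero] at this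
    have bT := T_norm_le hw hw0 j
    have hfin : ‖T w j‖ * (‖∏ i ∈ s₁, (1 - w ^ (6*(i+1)))‖ * ‖∏ i ∈ s₂, (1 - w ^ (6*(i+1)))‖)
        ≤ ‖w‖ ^ j.natAbs * (Real.exp (1/(1-‖w‖)) * Real.exp (1/(1-‖w‖))) := by
      apply mul_le_mul bT (mul_le_mul b1 b2 (norm_nonneg _) hE0)
        (by positivity) (by positivity)
    refine hfin.trans (le_of_eq ?_)
    ring
  · rw [norm_zero]
    positivity

lemma summable_bound (hw : ‖w‖ < 1) :
    Summable (fun j : ℤ => (Real.exp (1/(1-‖w‖)))^2 * ‖w‖ ^ j.natAbs) := by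
  apply Summable.mul_left
  apply Summable.of_nat_of_neg
  · simpa using summable_geometric_of_lt_one (norm_nonneg w) hw
  · simpa using summable_geometric_of_lt_one (norm_nonneg w) hw

theorem key_id (hw : ‖w‖ < 1) (hw0 : w ≠ 0) :
    ∏' k : ℕ, (1 - w ^ (2*(k+1))) = ∑' j : ℤ, ((-1 : ℂ) ^ j * w ^ (3*j^2+j)) := by
  have he2 : ∀ i : ℕ, i + 1 ≤ 2*(i+1) := fun i => by omega
  have hprod : Tendsto (fun n => ∏ i ∈ range (3*n), (1 - w ^ (2*(i+1)))) atTop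
      (𝓝 (∏' k : ℕ, (1 - w ^ (2*(k+1))))) :=
    ((multipliable_aux hw _ he2).hasProd.tendsto_prod_nat).comp
      (tendsto_atTop_mono (fun n => by simp only [id_eq]; omega) tendsto_id)
  have hsum : Tendsto (fun n : ℕ => ∑' j : ℤ,
      (if j ∈ Icc (-(n:ℤ)) (n:ℤ) then T w j * (pp w n * cgb w (2*n) ((n:ℤ)+j)) else 0)) atTop
      (𝓝 (∑' j : ℤ, T w j)) := by
    apply tendsto_tsum_of_dominated_convergence (summable_bound hw)
    · intro j
      have h1 : Tendsto (fun n => T w j * (pp w n * cgb w (2*n) ((n:ℤ)+j))) atTop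
          (𝓝 (T w j)) := by
        have h2 := (D_tendsto hw j).const_mul (T w j)
        simpa using h2
      apply h1.congr'
      filter_upwards [eventually_ge_atTop j.natAbs] with n hn
      rw [if_pos (by rw [mem_Icc]; omega)]
    · filter_upwards with n
      intro j
      exact F_bound hw hw0 n j
  have heq : (fun n : ℕ => ∑' j : ℤ,
      (if j ∈ Icc (-(n:ℤ)) (n:ℤ) then T w j * (pp w n * cgb w (2*n) ((n:ℤ)+j)) else 0))
      = fun n => ∏ i ∈ range (3*n), (1 - w ^ (2*(i+1))) := by
    funext n
    rw [tsum_eq_sum (s := Icc (-(n:ℤ)) (n:ℤ)) (fun j hj => if_neg hj), main_id hw hw0 n, mul_sum]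
    apply sum_congr rfl
    intro j hj
    rw [if_pos hj]
    ring
  rw [heq] at hsum
  have hfin := tendsto_nhds_unique hprod hsum
  rw [hfin]
  apply tsum_congr
  intro j
  rw [T]

end
end Penta

open scoped Real
open Complex

theorem euler_pentagonal (τ : ℂ) (hτ : 0 < τ.im) :
    Complex.exp ((π : ℂ) * I * τ / 12) *
        (∏' k : ℕ, (1 - Complex.exp (2 * ((k : ℂ) + 1) * (π : ℂ) * I * τ))) =
      Complex.exp ((π : ℂ) * I * τ / 12) *
        ∑' k : ℤ, (-1 : ℂ) ^ k *
          Complex.exp ((3 * (k : ℂ)^2 + (k : ℂ)) * (π : ℂ) * I * τ) := by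
  congr 1
  set w := Complex.exp ((π : ℂ) * I * τ) with hwdef
  have hw0 : w ≠ 0 := Complex.exp_ne_zero _
  have hre : ((π : ℂ) * I * τ).re = -(π * τ.im) := by
    simp [Complex.mul_re, Complex.mul_im]
  have hw : ‖w‖ < 1 := by
    rw [hwdef, Complex.norm_exp, hre, Real.exp_lt_one_iff]
    have := mul_pos Real.pi_pos hτ
    linarith
  calc ∏' k : ℕ, (1 - Complex.exp (2 * ((k : ℂ) + 1) * (π : ℂ) * I * τ))
      = ∏' k : ℕ, (1 - w ^ (2*(k+1))) := by
        apply tprod_congr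
        intro k
        rw [hwdef, ← Complex.exp_nat_mul]
        congr 2
        push_cast
        ring
    _ = ∑' j : ℤ, ((-1 : ℂ) ^ j * w ^ (3*j^2+j)) := Penta.key_id hw hw0
    _ = ∑' k : ℤ, (-1 : ℂ) ^ k *
          Complex.exp ((3 * (k : ℂ)^2 + (k : ℂ)) * (π : ℂ) * I * τ) := by
        apply tsum_congr
        intro k
        congr 1
        rw [hwdef, ← Complex.exp_int_mul]
        congr 1
        push_cast
        ring
end

section
/- Jacobi's quartic theta identity at the origin: for every τ in the upper half-plane, ϑ₃(τ)⁴ = ϑ₂(τ)⁴ + ϑ₄(τ)⁴, where ϑⱼ(τ) = θⱼ(0|τ) are the theta constants. -/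
open scoped Real
open Complex

noncomputable def jacobiθ₁ (x τ : ℂ) : ℂ :=
  -I * ∑' k : ℤ, (-1 : ℂ) ^ k *
    Complex.exp ((π : ℂ) * I * ((k : ℂ) + 1/2)^2 * τ + (2*(k : ℂ)+1) * (π : ℂ) * I * x)

noncomputable def jacobiθ₂ (x τ : ℂ) : ℂ :=
  ∑' k : ℤ,
    Complex.exp ((π : ℂ) * I * ((k : ℂ) + 1/2)^2 * τ + (2*(k : ℂ)+1) * (π : ℂ) * I * x)

noncomputable def jacobiθ₃ (x τ : ℂ) : ℂ :=
  ∑' k : ℤ, Complex.exp ((π : ℂ) * I * (k : ℂ)^2 * τ + 2 * (k : ℂ) * (π : ℂ) * I * x)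

noncomputable def jacobiθ₄ (x τ : ℂ) : ℂ :=
  ∑' k : ℤ, (-1 : ℂ) ^ k *
    Complex.exp ((π : ℂ) * I * (k : ℂ)^2 * τ + 2 * (k : ℂ) * (π : ℂ) * I * x)

namespace JacobiQuarticAux

noncomputable def G2 (τ : ℂ) (k : ℤ) : ℂ :=
  Complex.exp ((π : ℂ) * I * ((k : ℂ) + 1/2)^2 * τ)

noncomputable def G3 (τ : ℂ) (k : ℤ) : ℂ :=
  Complex.exp ((π : ℂ) * I * (k : ℂ)^2 * τ)

noncomputable def G4 (τ : ℂ) (k : ℤ) : ℂ :=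
  (-1 : ℂ) ^ k * Complex.exp ((π : ℂ) * I * (k : ℂ)^2 * τ)

lemma summable_G3 {τ : ℂ} (hτ : 0 < τ.im) : Summable (G3 τ) :=
  ((summable_jacobiTheta₂_term_iff 0 τ).mpr hτ).congr fun k => by
    simp [jacobiTheta₂_term, G3]

lemma summable_G2 {τ : ℂ} (hτ : 0 < τ.im) : Summable (G2 τ) := by
  have h := ((summable_jacobiTheta₂_term_iff (τ/2) τ).mpr hτ).mul_left
    (Complex.exp ((π : ℂ) * I * τ / 4))
  refine h.congr fun k => ?_
  rw [jacobiTheta₂_term, ← Complex.exp_add, G2]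
  congr 1
  ring

lemma summable_G4 {τ : ℂ} (hτ : 0 < τ.im) : Summable (G4 τ) := by
  refine ((summable_jacobiTheta₂_term_iff (1/2) τ).mpr hτ).congr fun k => ?_
  rw [jacobiTheta₂_term, G4]
  have h1 : 2 * (π : ℂ) * I * (k : ℂ) * (1/2) + (π : ℂ) * I * (k : ℂ)^2 * τ
      = (k : ℂ) * ((π : ℂ) * I) + (π : ℂ) * I * (k : ℂ)^2 * τ := by ring
  rw [h1, Complex.exp_add, Complex.exp_int_mul, Complex.exp_pi_mul_I]

lemma nsum {f : ℤ → ℂ} (h : Summable f) : Summable fun k => ‖f k‖ :=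
  summable_norm_iff.mpr h

/-- The set of pairs with even coordinate sum. -/
def ES : Set (ℤ × ℤ) := {p | Even (p.1 + p.2)}

noncomputable def eEven : ℤ × ℤ ≃ ES :=
  Equiv.ofBijective (fun p => ⟨(p.1 + p.2, p.1 - p.2), ⟨p.1, by ring⟩⟩)
    (by
      constructor
      · rintro ⟨a, b⟩ ⟨a', b'⟩ h
        simp only [Subtype.ext_iff, Prod.mk.injEq] at h
        simp only [Prod.mk.injEq]
        omega
      · rintro ⟨⟨m, n⟩, hm⟩
        obtain ⟨r, hr⟩ := hm
        refine ⟨(r, m - r), ?_⟩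
        simp only [Subtype.ext_iff, Prod.mk.injEq]
        omega)

noncomputable def eOdd1 : ℤ × ℤ ≃ ↥ESᶜ :=
  Equiv.ofBijective (fun p => ⟨(p.1 + p.2 + 1, p.1 - p.2), by
      simp only [ES, Set.mem_compl_iff, Set.mem_setOf_eq, Int.even_iff]
      omega⟩)
    (by
      constructor
      · rintro ⟨a, b⟩ ⟨a', b'⟩ h
        simp only [Subtype.mk.injEq, Prod.mk.injEq] at h
        simp only [Prod.mk.injEq]
        omega
      · rintro ⟨⟨m, n⟩, hm⟩
        simp only [ES, Set.mem_compl_iff, Set.mem_setOf_eq, Int.even_iff] at hm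
        refine ⟨((m + n - 1) / 2, m - 1 - (m + n - 1) / 2), ?_⟩
        simp only [Subtype.mk.injEq, Prod.mk.injEq]
        omega)

noncomputable def eOdd2 : ℤ × ℤ ≃ ↥ESᶜ :=
  Equiv.ofBijective (fun p => ⟨(p.1 + p.2, p.1 - p.2 - 1), by
      simp only [ES, Set.mem_compl_iff, Set.mem_setOf_eq, Int.even_iff]
      omega⟩)
    (by
      constructor
      · rintro ⟨a, b⟩ ⟨a', b'⟩ h
        simp only [Subtype.mk.injEq, Prod.mk.injEq] at h
        simp only [Prod.mk.injEq]
        omega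
      · rintro ⟨⟨m, n⟩, hm⟩
        simp only [ES, Set.mem_compl_iff, Set.mem_setOf_eq, Int.even_iff] at hm
        refine ⟨((m + n + 1) / 2, m - (m + n + 1) / 2), ?_⟩
        simp only [Subtype.mk.injEq, Prod.mk.injEq]
        omega)

lemma tsum_split1 (H : ℤ × ℤ → ℂ) (hH : Summable H) :
    ∑' p, H p = (∑' p : ℤ × ℤ, H (p.1 + p.2, p.1 - p.2))
      + ∑' p : ℤ × ℤ, H (p.1 + p.2 + 1, p.1 - p.2) := by
  rw [← Summable.tsum_add_tsum_compl (s := ES) (hH.subtype _) (hH.subtype _)]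
  congr 1
  · exact ((eEven.tsum_eq fun p : ES => H ↑p).symm).trans (tsum_congr fun q => rfl)
  · exact ((eOdd1.tsum_eq fun p : ↥ESᶜ => H ↑p).symm).trans (tsum_congr fun q => rfl)

lemma tsum_split2 (H : ℤ × ℤ → ℂ) (hH : Summable H) :
    ∑' p, H p = (∑' p : ℤ × ℤ, H (p.1 + p.2, p.1 - p.2))
      + ∑' p : ℤ × ℤ, H (p.1 + p.2, p.1 - p.2 - 1) := by
  rw [← Summable.tsum_add_tsum_compl (s := ES) (hH.subtype _) (hH.subtype _)]
  congr 1
  · exact ((eEven.tsum_eq fun p : ES => H ↑p).symm).trans (tsum_congr fun q => rfl)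
  · exact ((eOdd2.tsum_eq fun p : ↥ESᶜ => H ↑p).symm).trans (tsum_congr fun q => rfl)

lemma im_two_mul {τ : ℂ} (hτ : 0 < τ.im) : 0 < (2 * τ).im := by
  have : (2 * τ).im = 2 * τ.im := by simp [Complex.mul_im]
  rw [this]; linarith

lemma sq3 {τ : ℂ} (hτ : 0 < τ.im) :
    (∑' k, G3 τ k) * (∑' k, G3 τ k)
      = (∑' k, G3 (2*τ) k) * (∑' k, G3 (2*τ) k)
        + (∑' k, G2 (2*τ) k) * (∑' k, G2 (2*τ) k) := by
  have h2 := im_two_mul hτ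
  rw [tsum_mul_tsum_of_summable_norm (nsum (summable_G3 hτ)) (nsum (summable_G3 hτ)),
    tsum_split1 _ (summable_mul_of_summable_norm (nsum (summable_G3 hτ)) (nsum (summable_G3 hτ))),
    tsum_mul_tsum_of_summable_norm (nsum (summable_G3 h2)) (nsum (summable_G3 h2)),
    tsum_mul_tsum_of_summable_norm (nsum (summable_G2 h2)) (nsum (summable_G2 h2))]
  congr 1
  · refine tsum_congr fun p => ?_
    show G3 τ (p.1 + p.2) * G3 τ (p.1 - p.2) = G3 (2*τ) p.1 * G3 (2*τ) p.2
    rw [G3, G3, G3, G3, ← Complex.exp_add, ← Complex.exp_add]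
    congr 1
    push_cast
    ring
  · refine tsum_congr fun p => ?_
    show G3 τ (p.1 + p.2 + 1) * G3 τ (p.1 - p.2) = G2 (2*τ) p.1 * G2 (2*τ) p.2
    rw [G3, G3, G2, G2, ← Complex.exp_add, ← Complex.exp_add]
    congr 1
    push_cast
    ring

lemma sq4 {τ : ℂ} (hτ : 0 < τ.im) :
    (∑' k, G4 τ k) * (∑' k, G4 τ k)
      = (∑' k, G3 (2*τ) k) * (∑' k, G3 (2*τ) k)
        - (∑' k, G2 (2*τ) k) * (∑' k, G2 (2*τ) k) := by
  have h2 := im_two_mul hτ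
  rw [tsum_mul_tsum_of_summable_norm (nsum (summable_G4 hτ)) (nsum (summable_G4 hτ)),
    tsum_split1 _ (summable_mul_of_summable_norm (nsum (summable_G4 hτ)) (nsum (summable_G4 hτ))),
    tsum_mul_tsum_of_summable_norm (nsum (summable_G3 h2)) (nsum (summable_G3 h2)),
    tsum_mul_tsum_of_summable_norm (nsum (summable_G2 h2)) (nsum (summable_G2 h2)),
    sub_eq_add_neg]
  congr 1
  · refine tsum_congr fun p => ?_
    show G4 τ (p.1 + p.2) * G4 τ (p.1 - p.2) = G3 (2*τ) p.1 * G3 (2*τ) p.2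
    rw [G4, G4, G3, G3, mul_mul_mul_comm, ← zpow_add₀ (by norm_num : (-1 : ℂ) ≠ 0),
      Even.neg_one_zpow ⟨p.1, by ring⟩, one_mul, ← Complex.exp_add, ← Complex.exp_add]
    congr 1
    push_cast
    ring
  · rw [← tsum_neg]
    refine tsum_congr fun p => ?_
    show G4 τ (p.1 + p.2 + 1) * G4 τ (p.1 - p.2) = -(G2 (2*τ) p.1 * G2 (2*τ) p.2)
    rw [G4, G4, G2, G2, mul_mul_mul_comm, ← zpow_add₀ (by norm_num : (-1 : ℂ) ≠ 0),
      Odd.neg_one_zpow ⟨p.1, by ring⟩, ← Complex.exp_add, ← Complex.exp_add, neg_one_mul,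
      neg_inj]
    congr 1
    push_cast
    ring

lemma sq2 {τ : ℂ} (hτ : 0 < τ.im) :
    (∑' k, G2 τ k) * (∑' k, G2 τ k)
      = 2 * ((∑' k, G3 (2*τ) k) * (∑' k, G2 (2*τ) k)) := by
  have h2 := im_two_mul hτ
  have hBA : (∑' k, G2 (2*τ) k) * (∑' k, G3 (2*τ) k)
      = ∑' p : ℤ × ℤ, G2 (2*τ) p.1 * G3 (2*τ) p.2 :=
    tsum_mul_tsum_of_summable_norm (nsum (summable_G2 h2)) (nsum (summable_G3 h2))
  have hAB : (∑' k, G3 (2*τ) k) * (∑' k, G2 (2*τ) k)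
      = ∑' p : ℤ × ℤ, G3 (2*τ) p.1 * G2 (2*τ) p.2 :=
    tsum_mul_tsum_of_summable_norm (nsum (summable_G3 h2)) (nsum (summable_G2 h2))
  rw [tsum_mul_tsum_of_summable_norm (nsum (summable_G2 hτ)) (nsum (summable_G2 hτ)),
    tsum_split2 _ (summable_mul_of_summable_norm (nsum (summable_G2 hτ)) (nsum (summable_G2 hτ)))]
  have e1 : (∑' p : ℤ × ℤ, (fun p : ℤ × ℤ => G2 τ p.1 * G2 τ p.2) (p.1 + p.2, p.1 - p.2))
      = (∑' k, G2 (2*τ) k) * (∑' k, G3 (2*τ) k) := by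
    rw [hBA]
    refine tsum_congr fun p => ?_
    show G2 τ (p.1 + p.2) * G2 τ (p.1 - p.2) = G2 (2*τ) p.1 * G3 (2*τ) p.2
    rw [G2, G2, G2, G3, ← Complex.exp_add, ← Complex.exp_add]
    congr 1
    push_cast
    ring
  have e2 : (∑' p : ℤ × ℤ, (fun p : ℤ × ℤ => G2 τ p.1 * G2 τ p.2) (p.1 + p.2, p.1 - p.2 - 1))
      = (∑' k, G3 (2*τ) k) * (∑' k, G2 (2*τ) k) := by
    rw [hAB]
    refine tsum_congr fun p => ?_
    show G2 τ (p.1 + p.2) * G2 τ (p.1 - p.2 - 1) = G3 (2*τ) p.1 * G2 (2*τ) p.2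
    rw [G2, G2, G3, G2, ← Complex.exp_add, ← Complex.exp_add]
    congr 1
    push_cast
    ring
  rw [e1, e2]
  ring

end JacobiQuarticAux

theorem jacobi_quartic_identity (τ : ℂ) (hτ : 0 < τ.im) :
    jacobiθ₃ 0 τ ^ 4 = jacobiθ₂ 0 τ ^ 4 + jacobiθ₄ 0 τ ^ 4 := by
  open JacobiQuarticAux in
  have h3 : jacobiθ₃ 0 τ = ∑' k, G3 τ k :=
    tsum_congr fun k => by rw [mul_zero, add_zero, G3]
  have h2 : jacobiθ₂ 0 τ = ∑' k, G2 τ k :=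
    tsum_congr fun k => by rw [mul_zero, add_zero, G2]
  have h4 : jacobiθ₄ 0 τ = ∑' k, G4 τ k :=
    tsum_congr fun k => by rw [mul_zero, add_zero, G4]
  rw [h3, h2, h4]
  have s3 := JacobiQuarticAux.sq3 hτ
  have s2 := JacobiQuarticAux.sq2 hτ
  have s4 := JacobiQuarticAux.sq4 hτ
  set a := ∑' k, G3 τ k
  set b := ∑' k, G2 τ k
  set c := ∑' k, G4 τ k
  set A := ∑' k, G3 (2*τ) k
  set B := ∑' k, G2 (2*τ) k
  calc a ^ 4 = (a * a) * (a * a) := by ring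
    _ = (A * A + B * B) * (A * A + B * B) := by rw [s3]
    _ = (2 * (A * B)) * (2 * (A * B)) + (A * A - B * B) * (A * A - B * B) := by ring
    _ = (b * b) * (b * b) + (c * c) * (c * c) := by rw [← s2, ← s4]
    _ = b ^ 4 + c ^ 4 := by ring
end

section
/- The generalized quartic theta identity: for all x ∈ ℂ and τ in the upper half-plane, θ₁(x|τ)⁴ + θ₃(x|τ)⁴ = θ₂(x|τ)⁴ + θ₄(x|τ)⁴. -/
open scoped Real
open Complex

namespace JacobiQuartic

/-- integer-lattice theta term -/
noncomputable def c3 (x τ : ℂ) (k : ℤ) : ℂ :=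
  Complex.exp ((π : ℂ) * I * (k : ℂ)^2 * τ + 2 * (k : ℂ) * (π : ℂ) * I * x)

/-- half-integer-lattice theta term -/
noncomputable def c2 (x τ : ℂ) (k : ℤ) : ℂ :=
  Complex.exp ((π : ℂ) * I * ((k : ℂ) + 1/2)^2 * τ + (2*(k : ℂ)+1) * (π : ℂ) * I * x)

lemma c3_eq (x τ : ℂ) (n : ℤ) : c3 x τ n = jacobiTheta₂_term n x τ := by
  rw [c3, jacobiTheta₂_term]
  congr 1
  ring

lemma c2_eq (x τ : ℂ) (n : ℤ) :
    c2 x τ n = Complex.exp ((π : ℂ) * I * τ / 4 + (π : ℂ) * I * x) *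
      jacobiTheta₂_term n (x + τ/2) τ := by
  rw [c2, jacobiTheta₂_term, ← Complex.exp_add]
  congr 1
  ring

lemma summable_norm_theta_term (z : ℂ) {τ : ℂ} (hτ : 0 < τ.im) :
    Summable fun n : ℤ => ‖jacobiTheta₂_term n z τ‖ := by
  apply (summable_pow_mul_jacobiTheta₂_term_bound |z.im| hτ 0).of_norm_bounded
  intro n
  rw [norm_norm]
  simpa only [pow_zero, one_mul] using norm_jacobiTheta₂_term_le hτ le_rfl le_rfl n

lemma summable_norm_c3 (x : ℂ) {τ : ℂ} (hτ : 0 < τ.im) :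
    Summable fun n : ℤ => ‖c3 x τ n‖ := by
  simp only [c3_eq]
  exact summable_norm_theta_term x hτ

lemma summable_norm_c2 (x : ℂ) {τ : ℂ} (hτ : 0 < τ.im) :
    Summable fun n : ℤ => ‖c2 x τ n‖ := by
  simp only [c2_eq, norm_mul]
  exact (summable_norm_theta_term (x + τ/2) hτ).mul_left _

lemma norm_sign_mul (w : ℂ) (n : ℤ) : ‖(-1 : ℂ) ^ n * w‖ = ‖w‖ := by
  rw [norm_mul, norm_zpow, norm_neg, norm_one, one_zpow, one_mul]

/-- Norm-summability of the quadruple product. -/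
lemma quad_norm (u : ℤ → ℂ) (hu : Summable fun n => ‖u n‖) :
    Summable fun v : ℤ × ℤ × ℤ × ℤ => ‖u v.1 * (u v.2.1 * (u v.2.2.1 * u v.2.2.2))‖ := by
  have h2 : Summable fun p : ℤ × ℤ => ‖u p.1 * u p.2‖ := hu.mul_norm hu
  have h3 : Summable fun p : ℤ × ℤ × ℤ => ‖u p.1 * (u p.2.1 * u p.2.2)‖ :=
    Summable.mul_norm (f := u) (g := fun p : ℤ × ℤ => u p.1 * u p.2) hu h2
  exact Summable.mul_norm (f := u)
    (g := fun p : ℤ × ℤ × ℤ => u p.1 * (u p.2.1 * u p.2.2)) hu h3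

/-- Expand the fourth power of an absolutely convergent sum as a quadruple sum. -/
lemma quad (u : ℤ → ℂ) (hu : Summable fun n => ‖u n‖) :
    (∑' n, u n)^4 = ∑' v : ℤ × ℤ × ℤ × ℤ,
      u v.1 * (u v.2.1 * (u v.2.2.1 * u v.2.2.2)) := by
  have h2 : Summable fun p : ℤ × ℤ => ‖u p.1 * u p.2‖ := hu.mul_norm hu
  have h3 : Summable fun p : ℤ × ℤ × ℤ => ‖u p.1 * (u p.2.1 * u p.2.2)‖ :=
    Summable.mul_norm (f := u) (g := fun p : ℤ × ℤ => u p.1 * u p.2) hu h2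
  have e1 : ((∑' n, u n) * ∑' n, u n) = ∑' p : ℤ × ℤ, u p.1 * u p.2 :=
    tsum_mul_tsum_of_summable_norm hu hu
  have e2 : ((∑' n, u n) * ∑' p : ℤ × ℤ, u p.1 * u p.2)
      = ∑' p : ℤ × ℤ × ℤ, u p.1 * (u p.2.1 * u p.2.2) :=
    tsum_mul_tsum_of_summable_norm (f := u) (g := fun p : ℤ × ℤ => u p.1 * u p.2) hu h2
  have e3 : ((∑' n, u n) * ∑' p : ℤ × ℤ × ℤ, u p.1 * (u p.2.1 * u p.2.2))
      = ∑' p : ℤ × ℤ × ℤ × ℤ, u p.1 * (u p.2.1 * (u p.2.2.1 * u p.2.2.2)) :=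
    tsum_mul_tsum_of_summable_norm (f := u)
      (g := fun p : ℤ × ℤ × ℤ => u p.1 * (u p.2.1 * u p.2.2)) hu h3
  calc (∑' n, u n)^4 = (∑' n, u n) * ((∑' n, u n) * ((∑' n, u n) * ∑' n, u n)) := by ring
  _ = _ := by rw [e1, e2, e3]

def sg (v : ℤ × ℤ × ℤ × ℤ) : ℤ := v.1 + v.2.1 + v.2.2.1 + v.2.2.2

def phi (v : ℤ × ℤ × ℤ × ℤ) : ℤ × ℤ × ℤ × ℤ :=
  ((sg v - sg v % 2) / 2 - v.1, (sg v - sg v % 2) / 2 - v.2.1,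
   (sg v - sg v % 2) / 2 - v.2.2.1, (sg v - sg v % 2) / 2 - v.2.2.2)

def psi (v : ℤ × ℤ × ℤ × ℤ) : ℤ × ℤ × ℤ × ℤ :=
  ((sg v + sg v % 2) / 2 - v.1, (sg v + sg v % 2) / 2 - v.2.1,
   (sg v + sg v % 2) / 2 - v.2.2.1, (sg v + sg v % 2) / 2 - v.2.2.2)

def eqv : (ℤ × ℤ × ℤ × ℤ) ≃ (ℤ × ℤ × ℤ × ℤ) where
  toFun := phi
  invFun := psi
  left_inv := by
    rintro ⟨a, b, c, d⟩
    simp only [phi, psi, sg, Prod.ext_iff]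
    omega
  right_inv := by
    rintro ⟨a, b, c, d⟩
    simp only [phi, psi, sg, Prod.ext_iff]
    omega

lemma odd_sg_phi (v : ℤ × ℤ × ℤ × ℤ) : Odd (sg (phi v)) ↔ Odd (sg v) := by
  obtain ⟨a, b, c, d⟩ := v
  simp only [phi, sg, Int.odd_iff]
  omega

lemma c2_prod (x τ : ℂ) (a b c d k1 k2 k3 k4 : ℤ)
    (h1 : 2*k1 + 1 = b + c + d - a) (h2 : 2*k2 + 1 = a + c + d - b)
    (h3 : 2*k3 + 1 = a + b + d - c) (h4 : 2*k4 + 1 = a + b + c - d) :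
    c2 x τ k1 * (c2 x τ k2 * (c2 x τ k3 * c2 x τ k4))
      = c3 x τ a * (c3 x τ b * (c3 x τ c * c3 x τ d)) := by
  have H1 : (2*(k1:ℂ) + 1) = (b:ℂ) + c + d - a := by exact_mod_cast h1
  have H2 : (2*(k2:ℂ) + 1) = (a:ℂ) + c + d - b := by exact_mod_cast h2
  have H3 : (2*(k3:ℂ) + 1) = (a:ℂ) + b + d - c := by exact_mod_cast h3
  have H4 : (2*(k4:ℂ) + 1) = (a:ℂ) + b + c - d := by exact_mod_cast h4
  simp only [c2, c3, ← Complex.exp_add]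
  congr 1
  linear_combination
    ((π:ℂ) * I * τ / 4 * ((2*(k1:ℂ)+1) + ((b:ℂ) + c + d - a)) + (π:ℂ) * I * x) * H1 +
    ((π:ℂ) * I * τ / 4 * ((2*(k2:ℂ)+1) + ((a:ℂ) + c + d - b)) + (π:ℂ) * I * x) * H2 +
    ((π:ℂ) * I * τ / 4 * ((2*(k3:ℂ)+1) + ((a:ℂ) + b + d - c)) + (π:ℂ) * I * x) * H3 +
    ((π:ℂ) * I * τ / 4 * ((2*(k4:ℂ)+1) + ((a:ℂ) + b + c - d)) + (π:ℂ) * I * x) * H4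

end JacobiQuartic

open JacobiQuartic in
theorem jacobi_quartic_identity_general (x τ : ℂ) (hτ : 0 < τ.im) :
    jacobiθ₁ x τ ^ 4 + jacobiθ₃ x τ ^ 4 = jacobiθ₂ x τ ^ 4 + jacobiθ₄ x τ ^ 4 := by
  -- the four term functions
  set u3 : ℤ → ℂ := c3 x τ with hu3
  set u2 : ℤ → ℂ := c2 x τ with hu2
  set u4 : ℤ → ℂ := fun n => (-1 : ℂ) ^ n * c3 x τ n with hu4
  set u1 : ℤ → ℂ := fun n => (-1 : ℂ) ^ n * c2 x τ n with hu1
  have hn3 : Summable fun n => ‖u3 n‖ := summable_norm_c3 x hτ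
  have hn2 : Summable fun n => ‖u2 n‖ := summable_norm_c2 x hτ
  have hn4 : Summable fun n => ‖u4 n‖ := hn3.congr fun n => (norm_sign_mul _ n).symm
  have hn1 : Summable fun n => ‖u1 n‖ := hn2.congr fun n => (norm_sign_mul _ n).symm
  -- identify the thetas
  have hθ3 : jacobiθ₃ x τ = ∑' n, u3 n := rfl
  have hθ2 : jacobiθ₂ x τ = ∑' n, u2 n := rfl
  have hθ4 : jacobiθ₄ x τ = ∑' n, u4 n := rfl
  have hθ1 : jacobiθ₁ x τ = -I * ∑' n, u1 n := rfl
  have hI4 : ((-I : ℂ))^4 = 1 := by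
    simp [pow_succ, Complex.I_mul_I]
  have hθ1p : jacobiθ₁ x τ ^ 4 = (∑' n, u1 n)^4 := by
    rw [hθ1, mul_pow, hI4, one_mul]
  -- quadruple-sum forms
  set F1 : ℤ × ℤ × ℤ × ℤ → ℂ := fun v => u1 v.1 * (u1 v.2.1 * (u1 v.2.2.1 * u1 v.2.2.2)) with hF1
  set F2 : ℤ × ℤ × ℤ × ℤ → ℂ := fun v => u2 v.1 * (u2 v.2.1 * (u2 v.2.2.1 * u2 v.2.2.2)) with hF2
  set F3 : ℤ × ℤ × ℤ × ℤ → ℂ := fun v => u3 v.1 * (u3 v.2.1 * (u3 v.2.2.1 * u3 v.2.2.2)) with hF3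
  set F4 : ℤ × ℤ × ℤ × ℤ → ℂ := fun v => u4 v.1 * (u4 v.2.1 * (u4 v.2.2.1 * u4 v.2.2.2)) with hF4
  have hq1 : jacobiθ₁ x τ ^ 4 = ∑' v, F1 v := by rw [hθ1p, quad u1 hn1]
  have hq2 : jacobiθ₂ x τ ^ 4 = ∑' v, F2 v := by rw [hθ2, quad u2 hn2]
  have hq3 : jacobiθ₃ x τ ^ 4 = ∑' v, F3 v := by rw [hθ3, quad u3 hn3]
  have hq4 : jacobiθ₄ x τ ^ 4 = ∑' v, F4 v := by rw [hθ4, quad u4 hn4]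
  -- norm-summability of the quadruple products
  have hN1 : Summable fun v => ‖F1 v‖ := quad_norm u1 hn1
  have hN2 : Summable fun v => ‖F2 v‖ := quad_norm u2 hn2
  have hN3 : Summable fun v => ‖F3 v‖ := quad_norm u3 hn3
  have hN4 : Summable fun v => ‖F4 v‖ := quad_norm u4 hn4
  have hS1 : Summable F1 := hN1.of_norm
  have hS2 : Summable F2 := hN2.of_norm
  have hS3 : Summable F3 := hN3.of_norm
  have hS4 : Summable F4 := hN4.of_norm
  -- the truncated (odd-support) functions
  set f : ℤ × ℤ × ℤ × ℤ → ℂ := fun v => if Odd (sg v) then F3 v else 0 with hf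
  set g : ℤ × ℤ × ℤ × ℤ → ℂ := fun v => if Odd (sg v) then F2 v else 0 with hg
  have hSf : Summable f := by
    apply Summable.of_norm_bounded hN3
    intro v
    rw [hf]
    dsimp only
    split
    · exact le_rfl
    · simp
  have hSg : Summable g := by
    apply Summable.of_norm_bounded hN2
    intro v
    rw [hg]
    dsimp only
    split
    · exact le_rfl
    · simp
  -- sign identities for F1 and F4
  have hF4e : ∀ v, F4 v = (-1 : ℂ) ^ (sg v) * F3 v := by
    rintro ⟨a, b, c, d⟩
    simp only [hF4, hF3, hu4, sg]
    rw [zpow_add₀ (by norm_num : (-1:ℂ) ≠ 0), zpow_add₀ (by norm_num : (-1:ℂ) ≠ 0),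
      zpow_add₀ (by norm_num : (-1:ℂ) ≠ 0)]
    ring
  have hF1e : ∀ v, F1 v = (-1 : ℂ) ^ (sg v) * F2 v := by
    rintro ⟨a, b, c, d⟩
    simp only [hF1, hF2, hu1, sg]
    rw [zpow_add₀ (by norm_num : (-1:ℂ) ≠ 0), zpow_add₀ (by norm_num : (-1:ℂ) ≠ 0),
      zpow_add₀ (by norm_num : (-1:ℂ) ≠ 0)]
    ring
  -- pointwise combination
  have hpt : ∀ v, F1 v + F3 v - (F2 v + F4 v) = 2 * (f v - g v) := by
    intro v
    rw [hF4e v, hF1e v, hf, hg]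
    dsimp only
    rcases Int.even_or_odd (sg v) with hpar | hpar
    · have hno : ¬ Odd (sg v) := by simpa [Int.even_iff, Int.odd_iff] using hpar
      simp only [hpar.neg_one_zpow, if_neg hno]
      ring
    · simp only [hpar.neg_one_zpow, if_pos hpar]
      ring
  -- the change of variables: f = g ∘ phi
  have hfg : ∀ v, f v = g (phi v) := by
    rintro ⟨a, b, c, d⟩
    rw [hf, hg]
    dsimp only
    rcases Int.even_or_odd (sg (a, b, c, d)) with hpar | hpar
    · rw [if_neg (by simpa [Int.even_iff, Int.odd_iff] using hpar),
        if_neg (by rw [odd_sg_phi]; simpa [Int.even_iff, Int.odd_iff] using hpar)]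
    · rw [if_pos hpar, if_pos ((odd_sg_phi _).mpr hpar)]
      have hodd : (sg (a, b, c, d)) % 2 = 1 := Int.odd_iff.mp hpar
      rw [hF2, hF3]
      dsimp only
      symm
      apply c2_prod x τ a b c d <;>
        · simp only [phi, sg] at *
          omega
  have hfg' : ∑' v, f v = ∑' v, g v := by
    calc ∑' v, f v = ∑' v, g (eqv v) := by
          apply tsum_congr
          intro v
          exact hfg v
    _ = ∑' v, g v := eqv.tsum_eq g
  -- conclude
  have key : ∑' v, (F1 v + F3 v - (F2 v + F4 v)) = 0 := by
    calc ∑' v, (F1 v + F3 v - (F2 v + F4 v)) = ∑' v, 2 * (f v - g v) := by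
          apply tsum_congr; intro v; exact hpt v
    _ = 2 * ∑' v, (f v - g v) := tsum_mul_left
    _ = 2 * (∑' v, f v - ∑' v, g v) := by rw [Summable.tsum_sub hSf hSg]
    _ = 0 := by rw [hfg', sub_self, mul_zero]
  have key2 : (∑' v, F1 v + ∑' v, F3 v) - (∑' v, F2 v + ∑' v, F4 v) = 0 := by
    rw [← Summable.tsum_add hS1 hS3, ← Summable.tsum_add hS2 hS4, ← Summable.tsum_sub (hS1.add hS3) (hS2.add hS4)]
    exact key
  rw [hq1, hq2, hq3, hq4]
  linear_combination key2
end

section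
/- The three-term theta identity ϑ₃(τ)² θ₃(x|τ)² = ϑ₂(τ)² θ₂(x|τ)² + ϑ₄(τ)² θ₄(x|τ)² holds for all x ∈ ℂ and τ in the upper half-plane, where ϑⱼ(τ) = θⱼ(0|τ). -/
open scoped Real
open Complex

namespace ThetaAux

/-- Basic building block: shifted theta term. -/
noncomputable def mt (τ s z : ℂ) (k : ℤ) : ℂ :=
  Complex.exp ((π : ℂ) * I * τ * ((k : ℂ) + s) ^ 2 + 2 * (π : ℂ) * I * z * ((k : ℂ) + s))

lemma mt_eq (τ s z : ℂ) (k : ℤ) :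
    mt τ s z k = Complex.exp ((π : ℂ) * I * τ * s ^ 2 + 2 * (π : ℂ) * I * z * s) *
      jacobiTheta₂_term k (z + s * τ) τ := by
  rw [mt, jacobiTheta₂_term, ← Complex.exp_add]
  congr 1
  ring

lemma summable_norm_jacobiTheta₂_term {τ : ℂ} (hτ : 0 < τ.im) (z : ℂ) :
    Summable fun n : ℤ => ‖jacobiTheta₂_term n z τ‖ := by
  apply (summable_pow_mul_jacobiTheta₂_term_bound |z.im| hτ 0).of_norm_bounded
  intro n
  rw [norm_norm]
  simpa only [pow_zero, one_mul] using norm_jacobiTheta₂_term_le hτ le_rfl le_rfl n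

lemma summable_norm_mt {τ : ℂ} (hτ : 0 < τ.im) (s z : ℂ) :
    Summable fun k : ℤ => ‖mt τ s z k‖ := by
  simp_rw [mt_eq, norm_mul]
  exact (summable_norm_jacobiTheta₂_term hτ (z + s * τ)).mul_left _

lemma summable_norm_sgn_mt {τ : ℂ} (hτ : 0 < τ.im) (s z : ℂ) :
    Summable fun k : ℤ => ‖(-1 : ℂ) ^ k * mt τ s z k‖ := by
  have := summable_norm_mt hτ s z
  apply this.congr
  intro k
  rw [norm_mul, norm_zpow]
  simp

lemma θ3_eq (x τ : ℂ) : jacobiθ₃ x τ = ∑' k : ℤ, mt τ 0 x k := by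
  refine tsum_congr fun k => ?_
  rw [mt]
  congr 1
  ring

lemma θ2_eq (x τ : ℂ) : jacobiθ₂ x τ = ∑' k : ℤ, mt τ (1/2) x k := by
  refine tsum_congr fun k => ?_
  rw [mt]
  congr 1
  ring

lemma θ4_eq (x τ : ℂ) : jacobiθ₄ x τ = ∑' k : ℤ, (-1 : ℂ) ^ k * mt τ 0 x k := by
  refine tsum_congr fun k => ?_
  rw [mt]
  congr 2
  ring

/-- Index type for quadruple sums. -/
abbrev V := (ℤ × ℤ) × (ℤ × ℤ)

lemma tsum_mul4 {f g h l : ℤ → ℂ} (hf : Summable fun k => ‖f k‖)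
    (hg : Summable fun k => ‖g k‖) (hh : Summable fun k => ‖h k‖)
    (hl : Summable fun k => ‖l k‖) :
    ((∑' a, f a) * (∑' b, g b)) * ((∑' c, h c) * (∑' d, l d))
      = ∑' v : V, (f v.1.1 * g v.1.2) * (h v.2.1 * l v.2.2) := by
  rw [tsum_mul_tsum_of_summable_norm hf hg, tsum_mul_tsum_of_summable_norm hh hl,
    tsum_mul_tsum_of_summable_norm (hf.mul_norm hg) (hh.mul_norm hl)]

lemma summable_mul4 {f g h l : ℤ → ℂ} (hf : Summable fun k => ‖f k‖)
    (hg : Summable fun k => ‖g k‖) (hh : Summable fun k => ‖h k‖)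
    (hl : Summable fun k => ‖l k‖) :
    Summable fun v : V => (f v.1.1 * g v.1.2) * (h v.2.1 * l v.2.2) :=
  ((hf.mul_norm hg).mul_norm (hh.mul_norm hl)).of_norm

/-- Integer-point quadruple term (the `θ₃` / `θ₄` lattice). -/
noncomputable def Fv (x τ : ℂ) (v : V) : ℂ :=
  Complex.exp ((π : ℂ) * I * τ *
      ((v.1.1 : ℂ) ^ 2 + (v.1.2 : ℂ) ^ 2 + (v.2.1 : ℂ) ^ 2 + (v.2.2 : ℂ) ^ 2)
    + 2 * (π : ℂ) * I * x * ((v.2.1 : ℂ) + (v.2.2 : ℂ)))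

/-- Half-integer-point quadruple term (the `θ₂` lattice). -/
noncomputable def Fh (x τ : ℂ) (v : V) : ℂ :=
  Complex.exp ((π : ℂ) * I * τ *
      (((v.1.1 : ℂ) + 1/2) ^ 2 + ((v.1.2 : ℂ) + 1/2) ^ 2 + ((v.2.1 : ℂ) + 1/2) ^ 2
        + ((v.2.2 : ℂ) + 1/2) ^ 2)
    + 2 * (π : ℂ) * I * x * (((v.2.1 : ℂ) + 1/2) + ((v.2.2 : ℂ) + 1/2)))

def S (v : V) : ℤ := v.1.1 + v.1.2 + v.2.1 + v.2.2

lemma mul4_Fv (x τ : ℂ) (v : V) :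
    (mt τ 0 0 v.1.1 * mt τ 0 0 v.1.2) * (mt τ 0 x v.2.1 * mt τ 0 x v.2.2) = Fv x τ v := by
  rw [mt, mt, mt, mt, Fv, ← Complex.exp_add, ← Complex.exp_add, ← Complex.exp_add]
  congr 1
  ring

lemma mul4_Fh (x τ : ℂ) (v : V) :
    (mt τ (1/2) 0 v.1.1 * mt τ (1/2) 0 v.1.2) * (mt τ (1/2) x v.2.1 * mt τ (1/2) x v.2.2)
      = Fh x τ v := by
  rw [mt, mt, mt, mt, Fh, ← Complex.exp_add, ← Complex.exp_add, ← Complex.exp_add]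
  congr 1
  ring

lemma mul4_Fv_sgn (x τ : ℂ) (v : V) :
    (((-1 : ℂ) ^ v.1.1 * mt τ 0 0 v.1.1) * ((-1 : ℂ) ^ v.1.2 * mt τ 0 0 v.1.2)) *
      (((-1 : ℂ) ^ v.2.1 * mt τ 0 x v.2.1) * ((-1 : ℂ) ^ v.2.2 * mt τ 0 x v.2.2))
      = (-1 : ℂ) ^ (S v) * Fv x τ v := by
  have hne : (-1 : ℂ) ≠ 0 := by norm_num
  calc (((-1 : ℂ) ^ v.1.1 * mt τ 0 0 v.1.1) * ((-1 : ℂ) ^ v.1.2 * mt τ 0 0 v.1.2)) *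
      (((-1 : ℂ) ^ v.2.1 * mt τ 0 x v.2.1) * ((-1 : ℂ) ^ v.2.2 * mt τ 0 x v.2.2))
      = (((-1 : ℂ) ^ v.1.1 * (-1 : ℂ) ^ v.1.2) * ((-1 : ℂ) ^ v.2.1 * (-1 : ℂ) ^ v.2.2)) *
        ((mt τ 0 0 v.1.1 * mt τ 0 0 v.1.2) * (mt τ 0 x v.2.1 * mt τ 0 x v.2.2)) := by ring
    _ = (-1 : ℂ) ^ (S v) * Fv x τ v := by
        rw [mul4_Fv, ← zpow_add₀ hne, ← zpow_add₀ hne, ← zpow_add₀ hne,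
          show S v = v.1.1 + v.1.2 + (v.2.1 + v.2.2) by rw [S]; ring]

/-- Parametrization of odd-sum quadruples. -/
def jo (w : V) : V := ((w.1.1, w.1.2), (w.2.1, 2 * w.2.2 + 1 - w.1.1 - w.1.2 - w.2.1))

/-- Parametrization of even-sum quadruples. -/
def je (w : V) : V := ((w.1.1, w.1.2), (w.2.1, 2 * w.2.2 - w.1.1 - w.1.2 - w.2.1))

lemma jo_inj : Function.Injective jo := by
  intro w w' h
  rw [jo, jo, Prod.ext_iff, Prod.ext_iff, Prod.ext_iff] at h
  obtain ⟨⟨h1, h2⟩, h3, h4⟩ := h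
  ext <;> simp_all <;> omega

lemma je_inj : Function.Injective je := by
  intro w w' h
  rw [je, je, Prod.ext_iff, Prod.ext_iff, Prod.ext_iff] at h
  obtain ⟨⟨h1, h2⟩, h3, h4⟩ := h
  ext <;> simp_all <;> omega

lemma S_jo (w : V) : S (jo w) = 2 * w.2.2 + 1 := by
  simp [S, jo]

lemma S_je (w : V) : S (je w) = 2 * w.2.2 := by
  simp [S, je]

lemma range_jo {v : V} (h : Odd (S v)) : ∃ w, jo w = v := by
  obtain ⟨t, ht⟩ := h
  refine ⟨((v.1.1, v.1.2), (v.2.1, t)), ?_⟩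
  rw [jo]
  have : 2 * t + 1 - v.1.1 - v.1.2 - v.2.1 = v.2.2 := by rw [S] at ht; omega
  rw [this]

lemma range_je {v : V} (h : Even (S v)) : ∃ w, je w = v := by
  obtain ⟨t, ht⟩ := h
  refine ⟨((v.1.1, v.1.2), (v.2.1, t)), ?_⟩
  rw [je]
  have : 2 * t - v.1.1 - v.1.2 - v.2.1 = v.2.2 := by rw [S] at ht; omega
  rw [this]

/-- Reindexing equivalence used to match the two odd-type sums. -/
def μ : V ≃ V where
  toFun w := ((w.1.1 + w.2.1 - w.2.2, w.2.2 - w.1.2 - w.2.1), (w.2.2 + 1, w.2.2 - w.1.2))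
  invFun w := ((w.1.1 + w.1.2 + w.2.1 - w.2.2 - 1, w.2.1 - 1 - w.2.2),
    (w.2.2 - w.1.2, w.2.1 - 1))
  left_inv w := by ext <;> simp <;> ring
  right_inv w := by ext <;> simp <;> ring

/-- Sign flip of the first coordinate: an involutive equivalence. -/
def flipm : V ≃ V where
  toFun v := ((-1 - v.1.1, v.1.2), (v.2.1, v.2.2))
  invFun v := ((-1 - v.1.1, v.1.2), (v.2.1, v.2.2))
  left_inv v := by ext <;> simp
  right_inv v := by ext <;> simp

lemma Fh_flipm (x τ : ℂ) (v : V) : Fh x τ (flipm v) = Fh x τ v := by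
  rw [Fh, Fh]
  simp only [flipm, Equiv.coe_fn_mk]
  congr 1
  push_cast
  ring

lemma S_flipm (v : V) : S (flipm v) = S v - 2 * v.1.1 - 1 := by
  simp only [S, flipm, Equiv.coe_fn_mk]
  ring

/-- The key Hadamard change of variables:  the half-integer lattice term at an even-sum
point equals the integer lattice term at the corresponding odd-sum point. -/
lemma Fh_je_eq (x τ : ℂ) (w : V) : Fh x τ (je w) = Fv x τ (jo (μ w)) := by
  rw [Fh, Fv, je, jo, μ]
  simp only [Equiv.coe_fn_mk]
  congr 1
  push_cast
  ring

end ThetaAux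

open ThetaAux in
theorem theta_three_term_identity (x τ : ℂ) (hτ : 0 < τ.im) :
    jacobiθ₃ 0 τ ^ 2 * jacobiθ₃ x τ ^ 2 =
      jacobiθ₂ 0 τ ^ 2 * jacobiθ₂ x τ ^ 2 + jacobiθ₄ 0 τ ^ 2 * jacobiθ₄ x τ ^ 2 := by
  have hne : (-1 : ℂ) ≠ 0 := by norm_num
  -- summability of the one-dimensional series
  have hm0 := summable_norm_mt hτ 0 (0 : ℂ)
  have hmx := summable_norm_mt hτ 0 x
  have hh0 := summable_norm_mt hτ (1/2 : ℂ) (0 : ℂ)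
  have hhx := summable_norm_mt hτ (1/2 : ℂ) x
  have hs0 := summable_norm_sgn_mt hτ 0 (0 : ℂ)
  have hsx := summable_norm_sgn_mt hτ 0 x
  -- the three products as quadruple sums
  have h3 : jacobiθ₃ 0 τ ^ 2 * jacobiθ₃ x τ ^ 2 = ∑' v : V, Fv x τ v := by
    rw [sq, sq, θ3_eq, θ3_eq, tsum_mul4 hm0 hm0 hmx hmx]
    exact tsum_congr (mul4_Fv x τ)
  have h2 : jacobiθ₂ 0 τ ^ 2 * jacobiθ₂ x τ ^ 2 = ∑' v : V, Fh x τ v := by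
    rw [sq, sq, θ2_eq, θ2_eq, tsum_mul4 hh0 hh0 hhx hhx]
    exact tsum_congr (mul4_Fh x τ)
  have h4 : jacobiθ₄ 0 τ ^ 2 * jacobiθ₄ x τ ^ 2 = ∑' v : V, (-1 : ℂ) ^ (S v) * Fv x τ v := by
    rw [sq, sq, θ4_eq, θ4_eq, tsum_mul4 hs0 hs0 hsx hsx]
    exact tsum_congr (mul4_Fv_sgn x τ)
  rw [h3, h2, h4]
  -- summability of the quadruple sums
  have hFv : Summable (Fv x τ) := by
    have := summable_mul4 hm0 hm0 hmx hmx
    exact this.congr (mul4_Fv x τ)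
  have hFh : Summable (Fh x τ) := by
    have := summable_mul4 hh0 hh0 hhx hhx
    exact this.congr (mul4_Fh x τ)
  have hFhn : Summable fun v : V => ‖Fh x τ v‖ := by
    have := (hh0.mul_norm hh0).mul_norm (hhx.mul_norm hhx)
    apply this.congr
    intro v
    rw [mul4_Fh x τ v]
  have hFvs : Summable fun v : V => (-1 : ℂ) ^ (S v) * Fv x τ v := by
    have := summable_mul4 hs0 hs0 hsx hsx
    exact this.congr (mul4_Fv_sgn x τ)
  -- reduce to:  ∑ Fv - ∑ sgn • Fv = ∑ Fh
  rw [← sub_eq_iff_eq_add, ← Summable.tsum_sub hFv hFvs]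
  -- LHS: supported on odd-sum points
  set G : V → ℂ := fun v => Fv x τ v - (-1 : ℂ) ^ (S v) * Fv x τ v with hG
  have hGsupp : Function.support G ⊆ Set.range jo := by
    intro v hv
    rcases Int.even_or_odd (S v) with he | ho
    · exfalso
      apply hv
      simp only [hG, he.neg_one_zpow, one_mul, sub_self]
    · obtain ⟨w, hw⟩ := range_jo ho
      exact ⟨w, hw⟩
  have hL : ∑' v : V, G v = 2 * ∑' w : V, Fv x τ (jo w) := by
    rw [← Function.Injective.tsum_eq jo_inj hGsupp, ← tsum_mul_left]
    refine tsum_congr fun w => ?_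
    have : (-1 : ℂ) ^ (S (jo w)) = -1 := by
      rw [S_jo]
      exact (Odd.neg_one_zpow ⟨w.2.2, by ring⟩)
    simp only [hG, this]
    ring
  -- RHS: split the half lattice by parity of the sum
  set He : V → ℂ := fun v => if Even (S v) then Fh x τ v else 0 with hHe
  set Ho : V → ℂ := fun v => if Even (S v) then 0 else Fh x τ v with hHo
  have hsplit : ∀ v, Fh x τ v = He v + Ho v := by
    intro v
    by_cases h : Even (S v) <;> simp [hHe, hHo, h]
  have hHen : Summable He := by
    apply Summable.of_norm_bounded hFhn
    intro v
    by_cases h : Even (S v) <;> simp [hHe, h]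
  have hHon : Summable Ho := by
    apply Summable.of_norm_bounded hFhn
    intro v
    by_cases h : Even (S v) <;> simp [hHo, h]
  have hFh_split : ∑' v : V, Fh x τ v = (∑' v : V, He v) + ∑' v : V, Ho v := by
    rw [← Summable.tsum_add hHen hHon]
    exact tsum_congr hsplit
  have hHoHe : ∑' v : V, Ho v = ∑' v : V, He v := by
    rw [← Equiv.tsum_eq flipm Ho]
    refine tsum_congr fun v => ?_
    have hpar : Even (S (flipm v)) ↔ ¬ Even (S v) := by
      rw [S_flipm]
      constructor
      · intro h h'
        rcases h with ⟨a, ha⟩; rcases h' with ⟨b, hb⟩; omega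
      · intro h
        rcases Int.even_or_odd (S v) with he | ⟨b, hb⟩
        · exact absurd he h
        · exact ⟨S v - v.1.1 - b - 1, by omega⟩
    by_cases h : Even (S v)
    · simp only [hHo, hHe, hpar, h, not_true_eq_false, if_false, if_true, Fh_flipm]
    · simp only [hHo, hHe, hpar, h, not_false_eq_true, if_true, if_false, Fh_flipm]
  have hHesupp : Function.support He ⊆ Set.range je := by
    intro v hv
    by_cases h : Even (S v)
    · exact range_je h
    · exfalso; apply hv; simp [hHe, h]
  have hR : ∑' v : V, Fh x τ v = 2 * ∑' w : V, Fv x τ (jo w) := by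
    rw [hFh_split, hHoHe, ← two_mul, ← Function.Injective.tsum_eq je_inj hHesupp]
    congr 1
    calc ∑' w : V, He (je w) = ∑' w : V, Fv x τ (jo (μ w)) := by
          refine tsum_congr fun w => ?_
          have : Even (S (je w)) := ⟨w.2.2, by rw [S_je]; ring⟩
          simp only [hHe, this, if_true, Fh_je_eq]
        _ = ∑' w : V, Fv x τ (jo w) := Equiv.tsum_eq μ (fun w => Fv x τ (jo w))
  rw [hL, hR]
end

section
/- The Taylor coefficients of θ₃ in x are expressed through τ-derivatives of the theta constant: θ₃(x|τ) = ∑_{k=0}^∞ [(4πi)^k / (2k)!] · (d^k ϑ₃/dτ^k)(τ) · x^{2k}, for all x ∈ ℂ and τ in the upper half-plane. -/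
open scoped Real
open Complex

/-- The value of the theta constant as a sum. -/
lemma θconst_eq (t : ℂ) :
    jacobiθ₃ 0 t = ∑' n : ℤ, Complex.exp ((π : ℂ) * I * (n : ℂ)^2 * t) := by
  simp [jacobiθ₃]

lemma norm_term (n : ℤ) (k : ℕ) (y : ℂ) :
    ‖((π : ℂ) * I * (n:ℂ)^2)^k * Complex.exp ((π:ℂ) * I * (n:ℂ)^2 * y)‖
      = (π * (n:ℝ)^2)^k * Real.exp (-(π * n^2 * y.im)) := by
  have h : (π:ℂ) * I * (n:ℂ)^2 * y = ((π * (n:ℝ)^2 : ℝ) : ℂ) * y * I := by push_cast; ring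
  have hb : ‖(π : ℂ) * I * (n:ℂ)^2‖ = π * (n:ℝ)^2 := by
    simp [abs_of_pos Real.pi_pos, _root_.sq_abs]
  rw [norm_mul, norm_pow, hb, Complex.norm_exp, h, mul_I_re,
    im_ofReal_mul]

lemma summable_theta_pow (k : ℕ) {T : ℝ} (hT : 0 < T) :
    Summable (fun n : ℤ => (π * (n:ℝ)^2)^k * Real.exp (-(π * n^2 * T))) := by
  have h := (summable_pow_mul_jacobiTheta₂_term_bound 0 hT (2*k)).mul_left (π ^ k)
  refine h.congr fun n => ?_
  have e1 : ((|n| : ℤ) : ℝ) ^ (2*k) = ((n:ℝ)^2)^k := by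
    rw [Int.cast_abs, pow_mul, _root_.sq_abs]
  have e2 : -π * (T*(n:ℝ)^2 - 2*0*((|n| : ℤ):ℝ)) = -(π*(n:ℝ)^2*T) := by ring
  rw [e1, e2, ← mul_assoc, ← mul_pow]

lemma norm_term_le (n : ℤ) (k : ℕ) {T : ℝ} (hT : 0 < T) {y : ℂ} (hy : T ≤ y.im) :
    ‖((π : ℂ) * I * (n:ℂ)^2)^k * Complex.exp ((π:ℂ) * I * (n:ℂ)^2 * y)‖
      ≤ (π * (n:ℝ)^2)^k * Real.exp (-(π * n^2 * T)) := by
  rw [norm_term]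
  refine mul_le_mul_of_nonneg_left (Real.exp_le_exp.2 ?_) (by positivity)
  have : (0:ℝ) ≤ π * n^2 := by positivity
  nlinarith

lemma iter_deriv_theta (k : ℕ) :
    ∀ ⦃τ : ℂ⦄, 0 < τ.im →
      iteratedDeriv k (fun t => ∑' n : ℤ, Complex.exp ((π:ℂ) * I * (n:ℂ)^2 * t)) τ
        = ∑' n : ℤ, ((π:ℂ) * I * (n:ℂ)^2)^k * Complex.exp ((π:ℂ) * I * (n:ℂ)^2 * τ) := by
  induction k with
  | zero => intro τ hτ; simp
  | succ k ih =>
    intro τ hτ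
    rw [iteratedDeriv_succ]
    have hopen : IsOpen {z : ℂ | 0 < z.im} := isOpen_lt continuous_const Complex.continuous_im
    have hev : iteratedDeriv k (fun t => ∑' n : ℤ, Complex.exp ((π:ℂ) * I * (n:ℂ)^2 * t))
        =ᶠ[nhds τ]
        (fun t => ∑' n : ℤ, ((π:ℂ) * I * (n:ℂ)^2)^k * Complex.exp ((π:ℂ) * I * (n:ℂ)^2 * t)) :=
      Filter.eventuallyEq_of_mem (hopen.mem_nhds hτ) (fun t ht => ih ht)
    rw [hev.deriv_eq]
    set T : ℝ := τ.im / 2 with hTdef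
    have hT : 0 < T := half_pos hτ
    have hs : IsOpen {z : ℂ | T < z.im} := isOpen_lt continuous_const Complex.continuous_im
    have hmem : τ ∈ {z : ℂ | T < z.im} := half_lt_self hτ
    apply HasDerivAt.deriv
    refine hasDerivAt_tsum_of_isPreconnected (summable_theta_pow (k+1) hT) hs
      ((convex_halfSpace_im_gt T).isPreconnected) (fun n y _ => ?_)
      (fun n y hy => norm_term_le n (k+1) hT (le_of_lt hy)) hmem ?_ hmem
    · have h1 : HasDerivAt (fun t : ℂ => (π:ℂ) * I * (n:ℂ)^2 * t) ((π:ℂ) * I * (n:ℂ)^2) y := by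
        simpa using (hasDerivAt_id y).const_mul ((π:ℂ) * I * (n:ℂ)^2)
      have h2 := h1.cexp.const_mul (((π:ℂ) * I * (n:ℂ)^2)^k)
      convert h2 using 1
      · rfl
      rw [pow_succ]
      ring
    · exact Summable.of_norm_bounded (summable_theta_pow k hT)
        (fun n => norm_term_le n k hT (le_of_lt hmem))


theorem theta3_taylor_via_theta_constant (x τ : ℂ) (hτ : 0 < τ.im) :
    jacobiθ₃ x τ =
      ∑' k : ℕ, (4 * (π : ℂ) * I) ^ k / ((2 * k).factorial : ℂ) *
        iteratedDeriv k (fun t => jacobiθ₃ 0 t) τ * x ^ (2 * k) := by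
  set f : ℤ → ℕ → ℂ := fun n k =>
    (2 * (π:ℂ) * I * (n:ℂ) * x) ^ (2*k) / ((2*k).factorial : ℂ) *
      Complex.exp ((π:ℂ) * I * (n:ℂ)^2 * τ) with hfdef
  set A : ℤ → ℂ := fun n =>
    Complex.exp ((π : ℂ) * I * (n : ℂ)^2 * τ + 2 * (n : ℂ) * (π : ℂ) * I * x) with hAdef
  set B : ℤ → ℂ := fun n =>
    Complex.exp ((π : ℂ) * I * (n : ℂ)^2 * τ - 2 * (n : ℂ) * (π : ℂ) * I * x) with hBdef
  have hexpnorm : ∀ n : ℤ, ‖Complex.exp ((π:ℂ) * I * (n:ℂ)^2 * τ)‖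
      = Real.exp (-(π * n^2 * τ.im)) := by
    intro n
    simpa using norm_term n 0 τ
  have hnorm : ∀ (n : ℤ) (k : ℕ), ‖f n k‖ =
      ‖2 * (π:ℂ) * I * (n:ℂ) * x‖ ^ (2*k) / (((2*k).factorial : ℕ) : ℝ) *
        Real.exp (-(π * n^2 * τ.im)) := by
    intro n k
    rw [hfdef]
    rw [norm_mul, norm_div, norm_pow, hexpnorm]
    norm_num
  have hcosh_le : ∀ r : ℝ, 0 ≤ r → Real.cosh r ≤ Real.exp r := by
    intro r hr
    rw [Real.cosh_eq]
    have := Real.exp_le_exp.2 (neg_le_self hr)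
    linarith
  -- summability of the double series of norms
  have hsn : Summable (fun p : ℤ × ℕ => ‖Function.uncurry f p‖) := by
    refine (summable_prod_of_nonneg (Pi.le_def.mpr fun p => norm_nonneg _)).mpr ⟨fun n => ?_, ?_⟩
    · exact (((Real.hasSum_cosh ‖2 * (π:ℂ) * I * (n:ℂ) * x‖).summable.mul_right
        (Real.exp (-(π * n^2 * τ.im)))).congr fun k => (hnorm n k).symm)
    · have hval : ∀ n : ℤ, ∑' k : ℕ, ‖f n k‖ =
          Real.cosh ‖2 * (π:ℂ) * I * (n:ℂ) * x‖ * Real.exp (-(π * n^2 * τ.im)) := by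
        intro n
        rw [tsum_congr (fun k => hnorm n k), tsum_mul_right,
          (Real.hasSum_cosh _).tsum_eq]
      have hbd := summable_pow_mul_jacobiTheta₂_term_bound ‖x‖ hτ 0
      refine Summable.of_nonneg_of_le (fun n => tsum_nonneg fun k => norm_nonneg _)
        (fun n => ?_) (hbd.congr fun n => by rw [pow_zero, one_mul])
      simp only [Function.uncurry_apply_pair]
      rw [hval n]
      have hr : ‖2 * (π:ℂ) * I * (n:ℂ) * x‖ = 2 * π * |(n:ℝ)| * ‖x‖ := by
        simp [abs_of_pos Real.pi_pos]
      calc Real.cosh ‖2 * (π:ℂ) * I * (n:ℂ) * x‖ * Real.exp (-(π * n^2 * τ.im))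
          ≤ Real.exp ‖2 * (π:ℂ) * I * (n:ℂ) * x‖ * Real.exp (-(π * n^2 * τ.im)) :=
            mul_le_mul_of_nonneg_right (hcosh_le _ (norm_nonneg _)) (Real.exp_nonneg _)
        _ = Real.exp (‖2 * (π:ℂ) * I * (n:ℂ) * x‖ + -(π * n^2 * τ.im)) :=
            (Real.exp_add _ _).symm
        _ ≤ Real.exp (-π * (τ.im * n^2 - 2 * ‖x‖ * |n|)) := by
            rw [Real.exp_le_exp, hr]
            push_cast [Int.cast_abs]
            nlinarith [abs_nonneg (n:ℝ), norm_nonneg x, Real.pi_pos]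
  have hsum : Summable (Function.uncurry f) := Summable.of_norm hsn
  -- summability of A and B
  have hA : Summable A := by
    refine ((summable_jacobiTheta₂_term_iff x τ).mpr hτ).congr fun n => ?_
    rw [jacobiTheta₂_term, hAdef]
    exact congrArg Complex.exp (by ring)
  have hB : Summable B := by
    refine ((summable_jacobiTheta₂_term_iff (-x) τ).mpr hτ).congr fun n => ?_
    rw [jacobiTheta₂_term, hBdef]
    exact congrArg Complex.exp (by ring)
  have hBA : ∑' n, B n = ∑' n, A n := by
    calc ∑' n : ℤ, B n = ∑' n : ℤ, A ((Equiv.neg ℤ) n) := by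
          refine tsum_congr fun n => ?_
          rw [hAdef, hBdef]
          simp only [Equiv.neg_apply]
          exact congrArg Complex.exp (by push_cast; ring)
      _ = ∑' n : ℤ, A n := (Equiv.neg ℤ).tsum_eq A
  -- left-hand side
  have h1 : ∀ n : ℤ, ∑' k : ℕ, f n k =
      Complex.cosh (2 * (π:ℂ) * I * (n:ℂ) * x) * Complex.exp ((π:ℂ) * I * (n:ℂ)^2 * τ) := by
    intro n
    rw [hfdef]
    rw [tsum_mul_right, ← Complex.cosh_eq_tsum]
  have h2 : ∀ n : ℤ, Complex.cosh (2 * (π:ℂ) * I * (n:ℂ) * x) *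
      Complex.exp ((π:ℂ) * I * (n:ℂ)^2 * τ) = (A n + B n) / 2 := by
    intro n
    rw [Complex.cosh, div_mul_eq_mul_div, add_mul, ← Complex.exp_add, ← Complex.exp_add,
      hAdef, hBdef]
    rw [show 2*(π:ℂ)*I*(n:ℂ)*x + (π:ℂ)*I*(n:ℂ)^2*τ
          = (π:ℂ)*I*(n:ℂ)^2*τ + 2*(n:ℂ)*(π:ℂ)*I*x from by ring,
        show -(2*(π:ℂ)*I*(n:ℂ)*x) + (π:ℂ)*I*(n:ℂ)^2*τ
          = (π:ℂ)*I*(n:ℂ)^2*τ - 2*(n:ℂ)*(π:ℂ)*I*x from by ring]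
  have hL : jacobiθ₃ x τ = ∑' n : ℤ, ∑' k : ℕ, f n k := by
    calc jacobiθ₃ x τ = ∑' n : ℤ, A n := by rw [jacobiθ₃]
      _ = (∑' n : ℤ, A n + ∑' n : ℤ, B n) / 2 := by rw [hBA]; ring
      _ = ∑' n : ℤ, (A n + B n) / 2 := by rw [tsum_div_const, hA.tsum_add hB]
      _ = ∑' n : ℤ, ∑' k : ℕ, f n k := by
          refine tsum_congr fun n => ?_
          rw [h1 n, h2 n]
  -- right-hand side terms
  have hR : ∀ k : ℕ, (4 * (π : ℂ) * I) ^ k / ((2 * k).factorial : ℂ) *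
      iteratedDeriv k (fun t => jacobiθ₃ 0 t) τ * x ^ (2 * k) = ∑' n : ℤ, f n k := by
    intro k
    have hθ : (fun t => jacobiθ₃ 0 t)
        = fun t => ∑' n : ℤ, Complex.exp ((π:ℂ) * I * (n:ℂ)^2 * t) := funext θconst_eq
    rw [hθ, iter_deriv_theta k hτ, ← tsum_mul_left, ← tsum_mul_right]
    refine tsum_congr fun n => ?_
    have hp : (2*(π:ℂ)*I*(n:ℂ)*x)^(2*k)
        = (4*(π:ℂ)*I)^k * ((π:ℂ)*I*(n:ℂ)^2)^k * x^(2*k) := by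
      rw [pow_mul, pow_mul x, ← mul_pow, ← mul_pow]
      congr 1
      ring
    simp only [hfdef, hp]
    ring
  calc jacobiθ₃ x τ = ∑' n : ℤ, ∑' k : ℕ, f n k := hL
    _ = ∑' k : ℕ, ∑' n : ℤ, f n k := (hsum.tsum_comm).symm
    _ = ∑' k : ℕ, (4 * (π : ℂ) * I) ^ k / ((2 * k).factorial : ℂ) *
        iteratedDeriv k (fun t => jacobiθ₃ 0 t) τ * x ^ (2 * k) :=
          tsum_congr fun k => (hR k).symm
end
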